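/- arXiv:2012.14002 — 5 statements merged into one kernel-verified Lean document; each statement's English description precedes it below -/
import Mathlib

section
/- Let p₁, p₂ ≥ 2 be coprime integers and φ_{p_i} the radical-inverse functions. Fix s₁, s₂ ≥ 1 and, for i = 1,2, numbers y_i = Σ_{1≤j≤s_i} y_{i,j} p_i^{-j} and k_i = Σ_{1≤j≤s_i} y_{i,j} p_i^{j-1}. Let M₁, M₂ be the integers in [0, p₁^{s₁}) and [0, p₂^{s₂}) with p₂^{s₂} M₁ ≡ 1 (mod p₁^{s₁}) and p₁^{s₁} M₂ ≡ 1 (mod p₂^{s₂}). Then for every nonnegative integer k, (φ_{p₁}(k), φ_{p₂}(k)) ∈ [y₁, y₁ + p₁^{-s₁}) × [y₂, y₂ + p₂^{-s₂}) if and only if k ≡ p₂^{s₂} M₁ k₁ + p₁^{s₁} M₂ k₂ (mod p₁^{s₁} p₂^{s₂}). -/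
private lemma sum_lt_pow (p : ℕ) (hp : 2 ≤ p) (s : ℕ) (a : ℕ → ℕ) (ha : ∀ i, a i < p) :
    ∑ i ∈ Finset.range s, a i * p ^ i < p ^ s := by
  obtain ⟨q, rfl⟩ : ∃ q, p = q + 1 := ⟨p - 1, by omega⟩
  induction s with
  | zero => simp
  | succ n ih =>
    rw [Finset.sum_range_succ, pow_succ]
    have h1 : a n * (q + 1) ^ n ≤ q * (q + 1) ^ n :=
      Nat.mul_le_mul_right _ (by have := ha n; omega)
    have h2 : (q + 1) ^ n + q * (q + 1) ^ n = (q + 1) ^ n * (q + 1) := by ring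
    omega

private lemma digits_unique (p : ℕ) (hp : 2 ≤ p) :
    ∀ (s : ℕ) (a b : ℕ → ℕ), (∀ i, a i < p) → (∀ i, b i < p) →
      (∑ i ∈ Finset.range s, a i * p ^ i = ∑ i ∈ Finset.range s, b i * p ^ i) →
      ∀ i < s, a i = b i := by
  intro s
  induction s with
  | zero => intro a b _ _ _ i hi; omega
  | succ n ih =>
    intro a b ha hb h i hi
    rw [Finset.sum_range_succ', Finset.sum_range_succ'] at h
    have e : ∀ (c : ℕ → ℕ), ∑ i ∈ Finset.range n, c (i + 1) * p ^ (i + 1)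
        = (∑ i ∈ Finset.range n, c (i + 1) * p ^ i) * p := by
      intro c; rw [Finset.sum_mul]; exact Finset.sum_congr rfl fun j _ => by ring
    rw [e a, e b, pow_zero, mul_one, mul_one] at h
    have h0 : a 0 = b 0 := by
      have := congrArg (· % p) h
      simp only [mul_comm _ p, Nat.mul_add_mod, Nat.mod_eq_of_lt (ha 0),
        Nat.mod_eq_of_lt (hb 0)] at this
      exact this
    have hXY : (∑ i ∈ Finset.range n, a (i + 1) * p ^ i)
        = ∑ i ∈ Finset.range n, b (i + 1) * p ^ i := by
      have hp0 : 0 < p := by omega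
      have h' : (∑ i ∈ Finset.range n, a (i + 1) * p ^ i) * p
          = (∑ i ∈ Finset.range n, b (i + 1) * p ^ i) * p := by omega
      exact Nat.eq_of_mul_eq_mul_right hp0 h'
    rcases Nat.eq_zero_or_pos i with rfl | hi0
    · exact h0
    · have := ih (fun j => a (j + 1)) (fun j => b (j + 1)) (fun j => ha _) (fun j => hb _)
        hXY (i - 1) (by omega)
      simpa [Nat.sub_add_cancel hi0] using this

private lemma ofDigits_eq_sum (p : ℕ) : ∀ (l : List ℕ),
    Nat.ofDigits p l = ∑ i ∈ Finset.range l.length, l.getD i 0 * p ^ i := by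
  intro l
  induction l with
  | nil => simp
  | cons d l ih =>
    rw [Nat.ofDigits_cons, List.length_cons, Finset.sum_range_succ']
    simp only [List.getD_cons_succ, List.getD_cons_zero, pow_zero, mul_one]
    rw [ih, Finset.mul_sum]
    rw [add_comm]
    congr 1
    · exact Finset.sum_congr rfl fun j _ => by ring

private lemma cast_sum_div (p : ℕ) (hp : 2 ≤ p) (s : ℕ) (a : ℕ → ℕ) :
    ((∑ i ∈ Finset.range s, a i * p ^ (s - 1 - i) : ℕ) : ℝ) / (p : ℝ) ^ s
      = ∑ i ∈ Finset.range s, (a i : ℝ) / (p : ℝ) ^ (i + 1) := by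
  have hp0 : (0 : ℝ) < (p : ℝ) := by positivity
  push_cast
  rw [Finset.sum_div]
  refine Finset.sum_congr rfl fun i hi => ?_
  have his : i < s := Finset.mem_range.1 hi
  have e : (p : ℝ) ^ s = (p : ℝ) ^ (s - 1 - i) * (p : ℝ) ^ (i + 1) := by
    rw [← pow_add]; congr 1; omega
  rw [e, mul_comm ((a i : ℝ)) _, mul_div_mul_left _ _ (ne_of_gt (pow_pos hp0 _))]

private lemma sum_div_lt_one (p : ℕ) (hp : 2 ≤ p) (u : ℕ) (a : ℕ → ℕ) (ha : ∀ i, a i < p) :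
    ∑ j ∈ Finset.range u, (a j : ℝ) / (p : ℝ) ^ (j + 1) < 1 := by
  have hp0 : (0 : ℝ) < (p : ℝ) ^ u := by positivity
  rw [← cast_sum_div p hp u a, div_lt_one hp0]
  have hC : (∑ j ∈ Finset.range u, a j * p ^ (u - 1 - j)) < p ^ u := by
    have hr : ∑ j ∈ Finset.range u, a j * p ^ (u - 1 - j)
        = ∑ j ∈ Finset.range u, a (u - 1 - j) * p ^ j := by
      rw [← Finset.sum_range_reflect (fun j => a (u - 1 - j) * p ^ j) u]
      refine Finset.sum_congr rfl fun j hj => ?_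
      have hju : j < u := Finset.mem_range.1 hj
      congr 2 <;> omega
    rw [hr]
    exact sum_lt_pow p hp u _ (fun i => ha _)
  exact_mod_cast hC

private lemma mod_pow_eq (p : ℕ) (hp : 2 ≤ p) (k s : ℕ) :
    k % p ^ s = ∑ i ∈ Finset.range s, (Nat.digits p k).getD i 0 * p ^ i := by
  set dig : ℕ → ℕ := fun i => (Nat.digits p k).getD i 0 with hdig_def
  have hdig : ∀ i, dig i < p := by
    intro i
    by_cases hiL : i < (Nat.digits p k).length
    · have : dig i ∈ Nat.digits p k := by
        rw [hdig_def]; simp only [List.getD_eq_getElem _ _ hiL]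
        exact List.getElem_mem _
      exact Nat.digits_lt_base hp this
    · have : dig i = 0 := List.getD_eq_default _ _ (by omega)
      omega
  set L := (Nat.digits p k).length with hL
  set t := max s L with ht
  have hkt : k = ∑ i ∈ Finset.range t, dig i * p ^ i := by
    conv_lhs => rw [← Nat.ofDigits_digits p k]
    rw [ofDigits_eq_sum]
    refine Finset.sum_subset (Finset.range_subset_range.2 (le_max_right s L)) ?_
    intro x _ hx
    have : dig x = 0 := List.getD_eq_default _ _ (by
      simp only [Finset.mem_range, not_lt] at hx; exact hx)
    exact mul_eq_zero_of_left this _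
  have hsplit : ∑ i ∈ Finset.range t, dig i * p ^ i
      = (∑ i ∈ Finset.range s, dig i * p ^ i)
        + p ^ s * ∑ j ∈ Finset.range (t - s), dig (s + j) * p ^ j := by
    rw [Finset.range_eq_Ico, ← Finset.sum_Ico_consecutive _ (Nat.zero_le s) (le_max_left s L),
      ← Finset.range_eq_Ico, Finset.sum_Ico_eq_sum_range, Finset.mul_sum]
    congr 1
    refine Finset.sum_congr rfl fun j _ => ?_
    rw [pow_add]; ring
  conv_lhs => rw [hkt, hsplit]
  rw [Nat.add_mul_mod_self_left]
  exact Nat.mod_eq_of_lt (sum_lt_pow p hp s _ (fun i => hdig i))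


/-- The van der Corput radical-inverse function in base `p`. -/
noncomputable def radInv (p k : ℕ) : ℝ :=
  ∑ i ∈ Finset.range (Nat.digits p k).length,
    ((Nat.digits p k).getD i 0 : ℝ) / (p : ℝ) ^ (i + 1)

private lemma radInv_mem_iff (p : ℕ) (hp : 2 ≤ p) (s : ℕ) (yd : ℕ → ℕ) (hyd : ∀ j, yd j < p)
    (y : ℝ) (hy : y = ∑ j ∈ Finset.range s, (yd (j + 1) : ℝ) / (p : ℝ) ^ (j + 1))
    (k₁ : ℕ) (hk₁ : k₁ = ∑ j ∈ Finset.range s, yd (j + 1) * p ^ j) (k : ℕ) :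
    radInv p k ∈ Set.Ico y (y + ((p : ℝ) ^ s)⁻¹) ↔ k ≡ k₁ [MOD p ^ s] := by
  have hpR : (0 : ℝ) < (p : ℝ) := by positivity
  have hps : (0 : ℝ) < (p : ℝ) ^ s := by positivity
  set dig : ℕ → ℕ := fun i => (Nat.digits p k).getD i 0 with hdig_def
  have hdig : ∀ i, dig i < p := by
    intro i
    by_cases hiL : i < (Nat.digits p k).length
    · have : dig i ∈ Nat.digits p k := by
        rw [hdig_def]; simp only [List.getD_eq_getElem _ _ hiL]
        exact List.getElem_mem _
      exact Nat.digits_lt_base hp this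
    · have : dig i = 0 := List.getD_eq_default _ _ (by omega)
      omega
  set L := (Nat.digits p k).length with hL
  set t := max s L with ht
  have h1 : radInv p k = ∑ i ∈ Finset.range t, (dig i : ℝ) / (p : ℝ) ^ (i + 1) := by
    rw [radInv]
    refine Finset.sum_subset (Finset.range_subset_range.2 (le_max_right s L)) ?_
    intro x _ hx
    have hx0 : dig x = 0 := List.getD_eq_default _ _ (by
      simp only [Finset.mem_range, not_lt] at hx; exact hx)
    have hx0' : ((Nat.digits p k).getD x 0 : ℝ) = 0 := by exact_mod_cast hx0
    rw [hx0', zero_div]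
  set A : ℕ := ∑ i ∈ Finset.range s, dig i * p ^ (s - 1 - i) with hA_def
  set B : ℕ := ∑ j ∈ Finset.range s, yd (j + 1) * p ^ (s - 1 - j) with hB_def
  set T : ℝ := ∑ i ∈ Finset.Ico s t, (dig i : ℝ) / (p : ℝ) ^ (i + 1) with hT_def
  have h2 : radInv p k = (A : ℝ) / (p : ℝ) ^ s + T := by
    rw [h1, Finset.range_eq_Ico, ← Finset.sum_Ico_consecutive _ (Nat.zero_le s) (le_max_left s L),
      ← Finset.range_eq_Ico, cast_sum_div p hp s dig]
  have hy' : y = (B : ℝ) / (p : ℝ) ^ s := by rw [hy, cast_sum_div p hp s]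
  have hT0 : 0 ≤ T := Finset.sum_nonneg fun i _ => by positivity
  have hT1 : T < ((p : ℝ) ^ s)⁻¹ := by
    have e1 : T = ∑ j ∈ Finset.range (t - s), (dig (s + j) : ℝ) / (p : ℝ) ^ (s + j + 1) :=
      hT_def.trans (Finset.sum_Ico_eq_sum_range _ _ _)
    have e2 : T = ((p : ℝ) ^ s)⁻¹
        * ∑ j ∈ Finset.range (t - s), (dig (s + j) : ℝ) / (p : ℝ) ^ (j + 1) := by
      rw [e1, Finset.mul_sum]
      refine Finset.sum_congr rfl fun j _ => ?_
      have epow : (p : ℝ) ^ (s + j + 1) = (p : ℝ) ^ s * (p : ℝ) ^ (j + 1) := by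
        ring
      rw [epow, div_mul_eq_div_div_swap, div_eq_inv_mul]
    rw [e2]
    have hinner : ∑ j ∈ Finset.range (t - s), (dig (s + j) : ℝ) / (p : ℝ) ^ (j + 1) < 1 :=
      sum_div_lt_one p hp (t - s) (fun j => dig (s + j)) (fun j => hdig _)
    have hinv : (0 : ℝ) < ((p : ℝ) ^ s)⁻¹ := inv_pos.2 hps
    calc ((p : ℝ) ^ s)⁻¹ * ∑ j ∈ Finset.range (t - s), (dig (s + j) : ℝ) / (p : ℝ) ^ (j + 1)
        ≤ ((p : ℝ) ^ s)⁻¹ * ∑ j ∈ Finset.range (t - s), (dig (s + j) : ℝ) / (p : ℝ) ^ (j + 1) :=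
          le_refl _
      _ < ((p : ℝ) ^ s)⁻¹ * 1 := by
          apply mul_lt_mul_of_pos_left hinner hinv
      _ = ((p : ℝ) ^ s)⁻¹ := mul_one _
  have hmemAB : radInv p k ∈ Set.Ico y (y + ((p : ℝ) ^ s)⁻¹) ↔ A = B := by
    rw [h2, hy', Set.mem_Ico]
    constructor
    · rintro ⟨hle, hlt⟩
      have hAB : (A : ℝ) < (B : ℝ) + 1 := by
        have hq : (A : ℝ) / (p : ℝ) ^ s < ((B : ℝ) + 1) / (p : ℝ) ^ s := by
          have h3 := lt_of_le_of_lt (le_add_of_nonneg_right hT0) hlt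
          calc (A : ℝ) / (p : ℝ) ^ s < (B : ℝ) / (p : ℝ) ^ s + ((p : ℝ) ^ s)⁻¹ := h3
            _ = ((B : ℝ) + 1) / (p : ℝ) ^ s := by field_simp
        have := (div_lt_div_iff₀ hps hps).1 hq
        exact lt_of_mul_lt_mul_right this (le_of_lt hps)
      have hBA : (B : ℝ) < (A : ℝ) + 1 := by
        have hq : (B : ℝ) / (p : ℝ) ^ s < ((A : ℝ) + 1) / (p : ℝ) ^ s := by
          calc (B : ℝ) / (p : ℝ) ^ s ≤ (A : ℝ) / (p : ℝ) ^ s + T := hle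
            _ < (A : ℝ) / (p : ℝ) ^ s + ((p : ℝ) ^ s)⁻¹ := by linarith
            _ = ((A : ℝ) + 1) / (p : ℝ) ^ s := by field_simp
        have := (div_lt_div_iff₀ hps hps).1 hq
        exact lt_of_mul_lt_mul_right this (le_of_lt hps)
      have h1' : A < B + 1 := by exact_mod_cast hAB
      have h2' : B < A + 1 := by exact_mod_cast hBA
      omega
    · intro hAB
      rw [hAB]
      exact ⟨by linarith, by linarith⟩
  have hABdig : A = B ↔ ∀ i < s, dig i = yd (i + 1) := by
    constructor
    · intro hAB
      have hA' : A = ∑ j ∈ Finset.range s, dig (s - 1 - j) * p ^ j := by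
        rw [hA_def, ← Finset.sum_range_reflect (fun i => dig i * p ^ (s - 1 - i)) s]
        refine Finset.sum_congr rfl fun j hj => ?_
        have hjs := Finset.mem_range.1 hj
        have e : s - 1 - (s - 1 - j) = j := by omega
        rw [e]
      have hB' : B = ∑ j ∈ Finset.range s, yd (s - j) * p ^ j := by
        rw [hB_def, ← Finset.sum_range_reflect (fun i => yd (i + 1) * p ^ (s - 1 - i)) s]
        refine Finset.sum_congr rfl fun j hj => ?_
        have hjs := Finset.mem_range.1 hj
        have e1 : s - 1 - j + 1 = s - j := by omega
        have e2 : s - 1 - (s - 1 - j) = j := by omega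
        rw [e1, e2]
      have huniq := digits_unique p hp s (fun j => dig (s - 1 - j)) (fun j => yd (s - j))
        (fun j => hdig _) (fun j => hyd _) (by rw [← hA', ← hB', hAB])
      intro i hi
      have h' : dig (s - 1 - (s - 1 - i)) = yd (s - (s - 1 - i)) := huniq (s - 1 - i) (by omega)
      have e1 : s - 1 - (s - 1 - i) = i := by omega
      have e2 : s - (s - 1 - i) = i + 1 := by omega
      rwa [e1, e2] at h'
    · intro hd
      exact Finset.sum_congr rfl fun i hi => by rw [hd i (Finset.mem_range.1 hi)]
  have hk₁lt : k₁ < p ^ s := hk₁ ▸ sum_lt_pow p hp s _ (fun j => hyd _)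
  have hmoddig : (k ≡ k₁ [MOD p ^ s]) ↔ ∀ i < s, dig i = yd (i + 1) := by
    have hmod : k % p ^ s = ∑ i ∈ Finset.range s, dig i * p ^ i := mod_pow_eq p hp k s
    constructor
    · intro h
      have hsum : (∑ i ∈ Finset.range s, dig i * p ^ i)
          = ∑ i ∈ Finset.range s, yd (i + 1) * p ^ i := by
        rw [← hmod, ← hk₁]
        calc k % p ^ s = k₁ % p ^ s := h
          _ = k₁ := Nat.mod_eq_of_lt hk₁lt
      exact digits_unique p hp s _ _ (fun i => hdig _) (fun i => hyd _) hsum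
    · intro hd
      show k % p ^ s = k₁ % p ^ s
      rw [hmod, Nat.mod_eq_of_lt hk₁lt, hk₁]
      exact Finset.sum_congr rfl fun i hi => by rw [hd i (Finset.mem_range.1 hi)]
  rw [hmemAB, hABdig, hmoddig]

theorem stmt1 (p₁ p₂ : ℕ) (hp₁ : 2 ≤ p₁) (hp₂ : 2 ≤ p₂) (hcop : Nat.Coprime p₁ p₂)
    (s₁ s₂ : ℕ) (hs₁ : 1 ≤ s₁) (hs₂ : 1 ≤ s₂)
    (yd₁ yd₂ : ℕ → ℕ) (hyd₁ : ∀ j, yd₁ j < p₁) (hyd₂ : ∀ j, yd₂ j < p₂)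
    (y₁ y₂ : ℝ)
    (hy₁ : y₁ = ∑ j ∈ Finset.range s₁, (yd₁ (j + 1) : ℝ) / (p₁ : ℝ) ^ (j + 1))
    (hy₂ : y₂ = ∑ j ∈ Finset.range s₂, (yd₂ (j + 1) : ℝ) / (p₂ : ℝ) ^ (j + 1))
    (k₁ k₂ : ℕ)
    (hk₁ : k₁ = ∑ j ∈ Finset.range s₁, yd₁ (j + 1) * p₁ ^ j)
    (hk₂ : k₂ = ∑ j ∈ Finset.range s₂, yd₂ (j + 1) * p₂ ^ j)
    (M₁ M₂ : ℕ) (hM₁r : M₁ < p₁ ^ s₁) (hM₂r : M₂ < p₂ ^ s₂)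
    (hM₁ : p₂ ^ s₂ * M₁ ≡ 1 [MOD p₁ ^ s₁]) (hM₂ : p₁ ^ s₁ * M₂ ≡ 1 [MOD p₂ ^ s₂]) :
    ∀ k : ℕ,
      (radInv p₁ k ∈ Set.Ico y₁ (y₁ + ((p₁ : ℝ) ^ s₁)⁻¹) ∧
       radInv p₂ k ∈ Set.Ico y₂ (y₂ + ((p₂ : ℝ) ^ s₂)⁻¹)) ↔
      k ≡ p₂ ^ s₂ * M₁ * k₁ + p₁ ^ s₁ * M₂ * k₂ [MOD p₁ ^ s₁ * p₂ ^ s₂] := by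
  intro k
  have key1 := radInv_mem_iff p₁ hp₁ s₁ yd₁ hyd₁ y₁ hy₁ k₁ hk₁ k
  have key2 := radInv_mem_iff p₂ hp₂ s₂ yd₂ hyd₂ y₂ hy₂ k₂ hk₂ k
  rw [key1, key2]
  set N₁ := p₁ ^ s₁ with hN₁
  set N₂ := p₂ ^ s₂ with hN₂
  set c := N₂ * M₁ * k₁ + N₁ * M₂ * k₂ with hc
  have hc₁ : c ≡ k₁ [MOD N₁] := by
    have h1 : N₂ * M₁ * k₁ ≡ 1 * k₁ [MOD N₁] := hM₁.mul_right k₁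
    have h2 : N₁ * M₂ * k₂ ≡ 0 [MOD N₁] := Nat.modEq_zero_iff_dvd.2 ⟨M₂ * k₂, by ring⟩
    calc c ≡ 1 * k₁ + 0 [MOD N₁] := h1.add h2
      _ = k₁ := by ring
  have hc₂ : c ≡ k₂ [MOD N₂] := by
    have h1 : N₁ * M₂ * k₂ ≡ 1 * k₂ [MOD N₂] := hM₂.mul_right k₂
    have h2 : N₂ * M₁ * k₁ ≡ 0 [MOD N₂] := Nat.modEq_zero_iff_dvd.2 ⟨M₁ * k₁, by ring⟩
    calc c ≡ 0 + 1 * k₂ [MOD N₂] := h2.add h1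
      _ = k₂ := by ring
  have hcopN : Nat.Coprime N₁ N₂ := Nat.Coprime.pow s₁ s₂ hcop
  rw [← Nat.modEq_and_modEq_iff_modEq_mul hcopN]
  constructor
  · rintro ⟨h1, h2⟩
    exact ⟨h1.trans hc₁.symm, h2.trans hc₂.symm⟩
  · rintro ⟨h1, h2⟩
    exact ⟨h1.trans hc₁, h2.trans hc₂⟩
end

section
/- Let p be a prime, and let integers r₀ < r₁ ≤ r₂ (with r₁ ≥ r₀ + 2) and integers a₁ ∈ I_{p^{r₁-r₀}}, a₂ ∈ I_{p^{r₂-r₁}} be given, where I_M = [-⌊(M-1)/2⌋, ⌊M/2⌋] ∩ ℤ. Suppose |a₁| > 8. Then the distance to the nearest integer of (a₁ p^{r₂-r₁} + a₂) / p^{r₂-r₀} satisfies ⟨(a₁ p^{r₂-r₁} + a₂)/p^{r₂-r₀}⟩ ≥ (|a₁|/2) / p^{r₁-r₀}. -/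
theorem stmt5 (p : ℕ) (hp : p.Prime) (r₀ r₁ r₂ : ℕ)
    (h01 : r₀ + 2 ≤ r₁) (h12 : r₁ ≤ r₂) (a₁ a₂ : ℤ)
    (ha₁ : a₁ ∈ Finset.Icc (-(((p : ℤ) ^ (r₁ - r₀) - 1) / 2)) ((p : ℤ) ^ (r₁ - r₀) / 2))
    (ha₂ : a₂ ∈ Finset.Icc (-(((p : ℤ) ^ (r₂ - r₁) - 1) / 2)) ((p : ℤ) ^ (r₂ - r₁) / 2))
    (ha : 8 < |a₁|) :
    (((|a₁| : ℤ) : ℝ) / 2) / (p : ℝ) ^ (r₁ - r₀) ≤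
      min (Int.fract (((a₁ * (p : ℤ) ^ (r₂ - r₁) + a₂ : ℤ) : ℝ) / (p : ℝ) ^ (r₂ - r₀)))
        (1 - Int.fract (((a₁ * (p : ℤ) ^ (r₂ - r₁) + a₂ : ℤ) : ℝ) / (p : ℝ) ^ (r₂ - r₀))) := by
  obtain ⟨hl1, hr1⟩ := Finset.mem_Icc.mp ha₁
  obtain ⟨hl2, hr2⟩ := Finset.mem_Icc.mp ha₂
  have hp2 : (2:ℤ) ≤ (p:ℤ) := by exact_mod_cast hp.two_le
  have hN1pos : (0:ℤ) < (p:ℤ) ^ (r₁ - r₀) := pow_pos (by linarith) _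
  have hN2pos : (0:ℤ) < (p:ℤ) ^ (r₂ - r₁) := pow_pos (by linarith) _
  have hb1 : 2 * |a₁| ≤ (p:ℤ) ^ (r₁ - r₀) := by
    rcases abs_cases a₁ with ⟨h, _⟩ | ⟨h, _⟩ <;> omega
  have hb2 : 2 * |a₂| ≤ (p:ℤ) ^ (r₂ - r₁) := by
    rcases abs_cases a₂ with ⟨h, _⟩ | ⟨h, _⟩ <;> omega
  have ha9 : (9:ℤ) ≤ |a₁| := by omega
  -- real setup
  set P₁ : ℝ := (p:ℝ) ^ (r₁ - r₀) with hP₁def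
  set P₂ : ℝ := (p:ℝ) ^ (r₂ - r₁) with hP₂def
  set A : ℝ := ((|a₁| : ℤ) : ℝ) with hAdef
  set B : ℝ := ((|a₂| : ℤ) : ℝ) with hBdef
  have hpR : (2:ℝ) ≤ (p:ℝ) := by exact_mod_cast hp.two_le
  have hP1pos : (0:ℝ) < P₁ := by rw [hP₁def]; exact pow_pos (by linarith) _
  have hP2pos : (0:ℝ) < P₂ := by rw [hP₂def]; exact pow_pos (by linarith) _
  have hP1four : (4:ℝ) ≤ P₁ := by
    calc (4:ℝ) = 2 ^ 2 := by norm_num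
    _ ≤ (p:ℝ) ^ 2 := by gcongr
    _ ≤ P₁ := by
        rw [hP₁def]
        exact pow_le_pow_right₀ (by linarith) (by omega)
  have h1 : 2 * A ≤ P₁ := by rw [hAdef, hP₁def]; exact_mod_cast hb1
  have h2 : 2 * B ≤ P₂ := by rw [hBdef, hP₂def]; exact_mod_cast hb2
  have hA9 : (9:ℝ) ≤ A := by rw [hAdef]; exact_mod_cast ha9
  have hBnn : (0:ℝ) ≤ B := by rw [hBdef]; positivity
  have hexp : r₂ - r₀ = (r₁ - r₀) + (r₂ - r₁) := by omega
  have hden : (p:ℝ) ^ (r₂ - r₀) = P₁ * P₂ := by rw [hexp, pow_add]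
  have hT : (0:ℝ) < P₁ * P₂ := by positivity
  set S : ℝ := (a₁:ℝ) * P₂ + (a₂:ℝ) with hSdef
  have hnum : ((a₁ * (p:ℤ) ^ (r₂ - r₁) + a₂ : ℤ) : ℝ) = S := by
    rw [hSdef]; push_cast; ring
  have habs1 : |(a₁:ℝ)| = A := by rw [hAdef]; push_cast; rfl
  have habs2 : |(a₂:ℝ)| = B := by rw [hBdef]; push_cast; rfl
  have hSlow : A * P₂ / 2 ≤ |S| := by
    have h3 : |(a₁:ℝ) * P₂| - |-(a₂:ℝ)| ≤ |(a₁:ℝ) * P₂ - (-(a₂:ℝ))| :=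
      abs_sub_abs_le_abs_sub _ _
    rw [abs_mul, abs_neg, habs1, habs2, abs_of_pos hP2pos] at h3
    have h4 : (a₁:ℝ) * P₂ - (-(a₂:ℝ)) = S := by rw [hSdef]; ring
    rw [h4] at h3
    nlinarith [mul_nonneg (by linarith : (0:ℝ) ≤ A - 1) hP2pos.le]
  have hSup : |S| ≤ A * P₂ + B := by
    calc |S| ≤ |(a₁:ℝ) * P₂| + |(a₂:ℝ)| := abs_add_le _ _
    _ = A * P₂ + B := by rw [abs_mul, habs1, habs2, abs_of_pos hP2pos]
  set c : ℝ := A / 2 / P₁ with hcdef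
  have hcpos : (0:ℝ) < c := by
    rw [hcdef]; exact div_pos (by linarith) hP1pos
  set x : ℝ := S / (P₁ * P₂) with hxdef
  have hgoal_rw : ((a₁ * (p:ℤ) ^ (r₂ - r₁) + a₂ : ℤ) : ℝ) / (p:ℝ) ^ (r₂ - r₀) = x := by
    rw [hnum, hden]
  have hcx : c ≤ |x| := by
    rw [hxdef, abs_div, abs_of_pos hT, hcdef]
    rw [div_le_div_iff₀ hP1pos hT]
    have := mul_le_mul_of_nonneg_right hSlow hP1pos.le
    linarith
  have hxu : |x| ≤ 1 - c := by
    rw [hxdef, abs_div, abs_of_pos hT, div_le_iff₀ hT]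
    have hc' : c * (P₁ * P₂) = A * P₂ / 2 := by
      rw [hcdef]; field_simp
    have key : (3 / 2 * A + 1 / 2) ≤ P₁ := by linarith
    have key2 := mul_le_mul_of_nonneg_right key hP2pos.le
    rw [sub_mul, one_mul, hc']
    linarith
  rw [hgoal_rw]
  rcases le_or_gt 0 x with hx0 | hx0
  · have hxabs : |x| = x := abs_of_nonneg hx0
    have hx1 : x < 1 := by rw [← hxabs]; linarith
    rw [Int.fract_eq_self.mpr ⟨hx0, hx1⟩]
    refine le_min ?_ ?_
    · rw [← hxabs]; exact hcx
    · rw [hxabs] at hxu; linarith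
  · have hxabs : |x| = -x := abs_of_neg hx0
    have hxm1 : (0:ℝ) ≤ x + 1 := by rw [hxabs] at hxu; linarith
    have hfr : Int.fract x = x + 1 := by
      have h5 : Int.fract (x + (1:ℤ)) = Int.fract x := Int.fract_add_intCast x 1
      rw [← h5, Int.fract_eq_self.mpr ⟨by push_cast; linarith, by push_cast; linarith⟩]
      push_cast; ring
    rw [hfr]
    refine le_min ?_ ?_
    · rw [hxabs] at hxu; linarith
    · rw [hxabs] at hcx; linarith
end

section
/- Let p₁ ≠ p₂ be primes, H₂(k) = (φ_{p₁}(k), φ_{p₂}(k)) the 2-dimensional Halton sequence, Q ≥ 0, N ≥ 2 integers, n = ⌊log₂ N⌋ + 1, and for x ∈ [0,1)² let [x]_{(n,n)} be the coordinatewise truncation of x to n base-p_i digits. Then the truncated local discrepancy function 𝒮(x) = D([x]_{(n,n)}, (H₂(k))_{k=Q}^{Q+N-1}) satisfies |𝒮(x) − D(x, (H₂(k))_{k=Q}^{Q+N-1})| ≤ 2 for all x ∈ [0,1)², where D(x, P_N) = Σ_{k} 1_{[0,x₁)×[0,x₂)}(H₂(k)) − N x₁ x₂. -/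
open scoped Classical

lemma radInv_zero (p : ℕ) : radInv p 0 = 0 := by simp [radInv]

lemma radInv_nonneg (p k : ℕ) : 0 ≤ radInv p k := by
  apply Finset.sum_nonneg
  intro i _
  positivity

lemma radInv_mul_base {p : ℕ} (hp : 2 ≤ p) (k : ℕ) :
    radInv p k * p = ((k % p : ℕ) : ℝ) + radInv p (k / p) := by
  rcases Nat.eq_zero_or_pos k with rfl | hk
  · simp [radInv_zero]
  have hp0 : (p : ℝ) ≠ 0 := by positivity
  have hd : Nat.digits p k = k % p :: Nat.digits p (k / p) := Nat.digits_def' hp hk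
  unfold radInv
  rw [hd]
  simp only [List.length_cons]
  rw [Finset.sum_range_succ']
  simp only [List.getD_cons_succ, List.getD_cons_zero]
  rw [add_mul, Finset.sum_mul]
  rw [add_comm]
  congr 1
  · rw [pow_one, div_mul_cancel₀ _ hp0]
  · apply Finset.sum_congr rfl
    intro i _
    rw [pow_succ, ← div_div, div_mul_cancel₀ _ hp0]

lemma radInv_lt_one {p : ℕ} (hp : 2 ≤ p) : ∀ k, radInv p k < 1 := by
  intro k
  induction k using Nat.strong_induction_on with
  | _ k ih =>
    rcases Nat.eq_zero_or_pos k with rfl | hk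
    · simp [radInv_zero]
    have hp0 : (0:ℝ) < (p:ℝ) := by
      have : 0 < p := by omega
      exact_mod_cast this
    have h1 : radInv p k * p = ((k % p : ℕ) : ℝ) + radInv p (k / p) := radInv_mul_base hp k
    have h2 : radInv p (k / p) < 1 := ih (k / p) (Nat.div_lt_self hk (by omega))
    have h3 : k % p + 1 ≤ p := Nat.mod_lt _ (by omega)
    have h3' : ((k % p : ℕ) : ℝ) + 1 ≤ (p : ℝ) := by exact_mod_cast h3
    nlinarith [radInv_nonneg p k]

/-- Reversed truncated digit sum. -/
def gsum (p n k : ℕ) : ℕ := ∑ i ∈ Finset.range n, (k / p ^ i % p) * p ^ (n - 1 - i)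

lemma gsum_succ (p n k : ℕ) : gsum p (n + 1) k = p * gsum p n k + k / p ^ n % p := by
  unfold gsum
  rw [Finset.sum_range_succ, Finset.mul_sum]
  congr 1
  · apply Finset.sum_congr rfl
    intro i hi
    have hi' := Finset.mem_range.mp hi
    have h : n + 1 - 1 - i = (n - 1 - i) + 1 := by omega
    rw [h, pow_succ]
    ring
  · simp

lemma gsum_lt {p : ℕ} (hp : 2 ≤ p) (n k : ℕ) : gsum p n k < p ^ n := by
  induction n with
  | zero => simp [gsum]
  | succ n ih =>
    rw [gsum_succ]
    have hr : k / p ^ n % p < p := Nat.mod_lt _ (by omega)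
    calc p * gsum p n k + k / p ^ n % p < p * gsum p n k + p := by
          exact Nat.add_lt_add_left hr _
      _ = p * (gsum p n k + 1) := by ring
      _ ≤ p * p ^ n := Nat.mul_le_mul_left _ (Nat.succ_le_of_lt ih)
      _ = p ^ (n + 1) := by rw [pow_succ]; ring

lemma gsum_inj {p : ℕ} (hp : 2 ≤ p) :
    ∀ (n k k' : ℕ), gsum p n k = gsum p n k' → k % p ^ n = k' % p ^ n := by
  intro n
  induction n with
  | zero => intro k k' _; simp [pow_zero, Nat.mod_one]
  | succ n ih =>
    intro k k' h
    rw [gsum_succ, gsum_succ] at h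
    have h1 : k / p ^ n % p < p := Nat.mod_lt _ (by omega)
    have h2 : k' / p ^ n % p < p := Nat.mod_lt _ (by omega)
    have hr : k / p ^ n % p = k' / p ^ n % p := by
      have hmod : (p * gsum p n k + k / p ^ n % p) % p
          = (p * gsum p n k' + k' / p ^ n % p) % p := by rw [h]
      simpa [Nat.add_mod, Nat.mul_mod_right, Nat.mod_eq_of_lt h1, Nat.mod_eq_of_lt h2]
        using hmod
    have hg : gsum p n k = gsum p n k' := by
      have : p * gsum p n k = p * gsum p n k' := by omega
      exact Nat.eq_of_mul_eq_mul_left (by omega) this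
    have hmod := ih k k' hg
    have e1 : k % p ^ (n + 1) = k % p ^ n + p ^ n * (k / p ^ n % p) := by
      rw [pow_succ]; exact Nat.mod_mul
    have e2 : k' % p ^ (n + 1) = k' % p ^ n + p ^ n * (k' / p ^ n % p) := by
      rw [pow_succ]; exact Nat.mod_mul
    rw [e1, e2, hmod, hr]

lemma radInv_mul_pow {p : ℕ} (hp : 2 ≤ p) (n k : ℕ) :
    radInv p k * (p : ℝ) ^ n = (gsum p n k : ℝ) + radInv p (k / p ^ n) := by
  induction n with
  | zero => simp [gsum]
  | succ n ih =>
    have hstep := radInv_mul_base hp (k / p ^ n)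
    have hdiv : k / p ^ n / p = k / p ^ (n + 1) := by
      rw [Nat.div_div_eq_div_mul, pow_succ]
    have : radInv p k * (p : ℝ) ^ (n + 1) = (radInv p k * (p : ℝ) ^ n) * p := by ring
    rw [this, ih, add_mul, hstep, hdiv, gsum_succ]
    push_cast
    ring

lemma floor_radInv {p : ℕ} (hp : 2 ≤ p) (n k : ℕ) :
    ⌊radInv p k * (p : ℝ) ^ n⌋ = (gsum p n k : ℤ) := by
  rw [radInv_mul_pow hp]
  have h0 := radInv_nonneg p (k / p ^ n)
  have h1 := radInv_lt_one hp (k / p ^ n)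
  rw [Int.floor_eq_iff]
  constructor <;> push_cast <;> linarith

lemma band_card {p : ℕ} (hp : 2 ≤ p) (Q N n : ℕ) (hNp : N < p ^ n) (x : ℝ) :
    ((Finset.Ico Q (Q + N)).filter (fun k =>
      ((⌊x * (p : ℝ) ^ n⌋ : ℤ) : ℝ) / (p : ℝ) ^ n ≤ radInv p k ∧ radInv p k < x)).card ≤ 1 := by
  rw [Finset.card_le_one]
  intro a ha b hb
  simp only [Finset.mem_filter, Finset.mem_Ico] at ha hb
  obtain ⟨⟨haQ, haN⟩, ha1, ha2⟩ := ha
  obtain ⟨⟨hbQ, hbN⟩, hb1, hb2⟩ := hb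
  have hp0 : (0:ℝ) < (p : ℝ) ^ n := by
    have : 0 < p := by omega
    positivity
  set m : ℤ := ⌊x * (p : ℝ) ^ n⌋ with hm
  have key : ∀ c : ℕ, ((m : ℝ) / (p : ℝ) ^ n ≤ radInv p c) → radInv p c < x →
      (gsum p n c : ℤ) = m := by
    intro c hc1 hc2
    rw [← floor_radInv hp n c]
    rw [Int.floor_eq_iff]
    constructor
    · calc (m : ℝ) = (m : ℝ) / (p : ℝ) ^ n * (p : ℝ) ^ n := by field_simp
        _ ≤ radInv p c * (p : ℝ) ^ n := mul_le_mul_of_nonneg_right hc1 hp0.le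
    · have h2 : x * (p : ℝ) ^ n < (m : ℝ) + 1 := Int.lt_floor_add_one _
      calc radInv p c * (p : ℝ) ^ n < x * (p : ℝ) ^ n :=
            mul_lt_mul_of_pos_right hc2 hp0
        _ < (m : ℝ) + 1 := h2
  have hga : (gsum p n a : ℤ) = m := key a ha1 ha2
  have hgb : (gsum p n b : ℤ) = m := key b hb1 hb2
  have hg : gsum p n a = gsum p n b := by exact_mod_cast hga.trans hgb.symm
  have hmod : a % p ^ n = b % p ^ n := gsum_inj hp n a b hg
  have hdvd : ((p ^ n : ℕ) : ℤ) ∣ (b : ℤ) - (a : ℤ) := Nat.ModEq.dvd hmod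
  have habs : |(b : ℤ) - (a : ℤ)| < ((p ^ n : ℕ) : ℤ) := by
    rw [abs_lt]
    constructor <;> [skip; skip] <;> omega
  have : (b : ℤ) - (a : ℤ) = 0 := Int.eq_zero_of_abs_lt_dvd hdvd habs
  omega

theorem stmt10 (p₁ p₂ : ℕ) (hp₁ : p₁.Prime) (hp₂ : p₂.Prime) (hne : p₁ ≠ p₂)
    (Q N : ℕ) (hN : 2 ≤ N) (n : ℕ) (hn : n = Nat.log 2 N + 1) :
    ∀ x₁ x₂ : ℝ, x₁ ∈ Set.Ico (0 : ℝ) 1 → x₂ ∈ Set.Ico (0 : ℝ) 1 →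
      abs
        (((((Finset.Ico Q (Q + N)).filter fun k =>
              radInv p₁ k < ((⌊x₁ * (p₁ : ℝ) ^ n⌋ : ℤ) : ℝ) / (p₁ : ℝ) ^ n ∧
              radInv p₂ k < ((⌊x₂ * (p₂ : ℝ) ^ n⌋ : ℤ) : ℝ) / (p₂ : ℝ) ^ n).card : ℝ)
            - (N : ℝ) * (((⌊x₁ * (p₁ : ℝ) ^ n⌋ : ℤ) : ℝ) / (p₁ : ℝ) ^ n)
                * (((⌊x₂ * (p₂ : ℝ) ^ n⌋ : ℤ) : ℝ) / (p₂ : ℝ) ^ n))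
          - ((((Finset.Ico Q (Q + N)).filter fun k =>
              radInv p₁ k < x₁ ∧ radInv p₂ k < x₂).card : ℝ)
            - (N : ℝ) * x₁ * x₂)) ≤ 2 := by
  intro x₁ x₂ hx₁ hx₂
  obtain ⟨hx₁0, hx₁1⟩ := hx₁
  obtain ⟨hx₂0, hx₂1⟩ := hx₂
  have hp₁2 : 2 ≤ p₁ := hp₁.two_le
  have hp₂2 : 2 ≤ p₂ := hp₂.two_le
  have hN2 : N < 2 ^ n := by
    rw [hn]; exact Nat.lt_pow_succ_log_self (by norm_num) N
  have hNp₁ : N < p₁ ^ n := lt_of_lt_of_le hN2 (Nat.pow_le_pow_left hp₁2 n)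
  have hNp₂ : N < p₂ ^ n := lt_of_lt_of_le hN2 (Nat.pow_le_pow_left hp₂2 n)
  have hq₁0 : (0:ℝ) < (p₁ : ℝ) ^ n := by
    have : 0 < p₁ := by omega
    positivity
  have hq₂0 : (0:ℝ) < (p₂ : ℝ) ^ n := by
    have : 0 < p₂ := by omega
    positivity
  set m₁ : ℤ := ⌊x₁ * (p₁ : ℝ) ^ n⌋ with hm₁
  set m₂ : ℤ := ⌊x₂ * (p₂ : ℝ) ^ n⌋ with hm₂
  set t₁ : ℝ := (m₁ : ℝ) / (p₁ : ℝ) ^ n with ht₁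
  set t₂ : ℝ := (m₂ : ℝ) / (p₂ : ℝ) ^ n with ht₂
  have ht₁0 : 0 ≤ t₁ := by
    apply div_nonneg _ hq₁0.le
    exact_mod_cast Int.floor_nonneg.mpr (by positivity)
  have ht₂0 : 0 ≤ t₂ := by
    apply div_nonneg _ hq₂0.le
    exact_mod_cast Int.floor_nonneg.mpr (by positivity)
  have ht₁x : t₁ ≤ x₁ := by
    rw [ht₁, div_le_iff₀ hq₁0]
    exact Int.floor_le _
  have ht₂x : t₂ ≤ x₂ := by
    rw [ht₂, div_le_iff₀ hq₂0]
    exact Int.floor_le _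
  have hNx₁ : (N : ℝ) * (x₁ - t₁) ≤ 1 := by
    have h1 : x₁ * (p₁ : ℝ) ^ n < (m₁ : ℝ) + 1 := Int.lt_floor_add_one _
    have h2 : x₁ - t₁ < 1 / (p₁ : ℝ) ^ n := by
      rw [ht₁, sub_lt_iff_lt_add, ← add_div]
      rw [lt_div_iff₀ hq₁0]
      linarith
    have h3 : ((N : ℝ)) < (p₁ : ℝ) ^ n := by exact_mod_cast hNp₁
    have h4 : 0 ≤ x₁ - t₁ := by linarith
    have h5 : (p₁ : ℝ) ^ n * (1 / (p₁ : ℝ) ^ n) = 1 := by field_simp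
    nlinarith [mul_le_mul h3.le h2.le h4 hq₁0.le]
  have hNx₂ : (N : ℝ) * (x₂ - t₂) ≤ 1 := by
    have h1 : x₂ * (p₂ : ℝ) ^ n < (m₂ : ℝ) + 1 := Int.lt_floor_add_one _
    have h2 : x₂ - t₂ < 1 / (p₂ : ℝ) ^ n := by
      rw [ht₂, sub_lt_iff_lt_add, ← add_div]
      rw [lt_div_iff₀ hq₂0]
      linarith
    have h3 : ((N : ℝ)) < (p₂ : ℝ) ^ n := by exact_mod_cast hNp₂
    have h4 : 0 ≤ x₂ - t₂ := by linarith
    have h5 : (p₂ : ℝ) ^ n * (1 / (p₂ : ℝ) ^ n) = 1 := by field_simp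
    nlinarith [mul_le_mul h3.le h2.le h4 hq₂0.le]
  set I := Finset.Ico Q (Q + N) with hI
  set F := I.filter (fun k => radInv p₁ k < t₁ ∧ radInv p₂ k < t₂) with hF
  set G := I.filter (fun k => radInv p₁ k < x₁ ∧ radInv p₂ k < x₂) with hG
  set B₁ := I.filter (fun k => t₁ ≤ radInv p₁ k ∧ radInv p₁ k < x₁) with hB₁
  set B₂ := I.filter (fun k => t₂ ≤ radInv p₂ k ∧ radInv p₂ k < x₂) with hB₂
  have hsub : F ⊆ G := by
    intro k hk
    simp only [hF, hG, Finset.mem_filter] at hk ⊢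
    exact ⟨hk.1, lt_of_lt_of_le hk.2.1 ht₁x, lt_of_lt_of_le hk.2.2 ht₂x⟩
  have hdiff : G \ F ⊆ B₁ ∪ B₂ := by
    intro k hk
    simp only [hG, hF, hB₁, hB₂, Finset.mem_sdiff, Finset.mem_filter, Finset.mem_union] at hk ⊢
    obtain ⟨⟨hkI, hk1, hk2⟩, hnot⟩ := hk
    by_cases h1 : radInv p₁ k < t₁
    · by_cases h2 : radInv p₂ k < t₂
      · exact absurd ⟨hkI, h1, h2⟩ hnot
      · exact Or.inr ⟨hkI, not_lt.mp h2, hk2⟩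
    · exact Or.inl ⟨hkI, not_lt.mp h1, hk1⟩
  have hB₁card : B₁.card ≤ 1 := band_card hp₁2 Q N n hNp₁ x₁
  have hB₂card : B₂.card ≤ 1 := band_card hp₂2 Q N n hNp₂ x₂
  have hcard1 : F.card ≤ G.card := Finset.card_le_card hsub
  have hcard2 : G.card ≤ F.card + 2 := by
    have h1 : (G \ F).card + F.card = G.card := Finset.card_sdiff_add_card_eq_card hsub
    have h2 : (G \ F).card ≤ (B₁ ∪ B₂).card := Finset.card_le_card hdiff
    have h3 : (B₁ ∪ B₂).card ≤ B₁.card + B₂.card := Finset.card_union_le _ _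
    omega
  have hc1 : (F.card : ℝ) ≤ (G.card : ℝ) := by exact_mod_cast hcard1
  have hc2 : (G.card : ℝ) ≤ (F.card : ℝ) + 2 := by exact_mod_cast hcard2
  have hN0 : (0:ℝ) ≤ (N : ℝ) := by positivity
  rw [abs_le]
  constructor
  · nlinarith [mul_nonneg (mul_nonneg hN0 ht₁0) (sub_nonneg.mpr ht₂x),
      mul_nonneg (mul_nonneg hN0 (sub_nonneg.mpr ht₁x)) hx₂0]
  · nlinarith [mul_le_one₀ hNx₂ hx₁0 hx₁1.le,
      mul_le_one₀ hNx₁ ht₂0 (le_trans ht₂x hx₂1.le)]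
end

section
/- Let p₁ ≠ p₂ be primes, r = (r₁,r₂), P_r = p₁^{r₁}p₂^{r₂}. With 𝒟_{r,N}(x) as in the truncated discrepancy decomposition, one has the finite Fourier expansion 𝒟_{r,N}(x) = Σ_{m ∈ I*_{P_r}} φ_{r,Q,N,m} ψ_r(m,x) e(−m X_r / P_r), where φ_{r,Q,N,m} = (1/P_r) Σ_{k=Q}^{Q+N−1} e(mk/P_r), ψ_r(m,x) = Π_{i=1}^2 Σ_{b_i=0}^{x_{i,r_i}−1} e(−m M_{i,r}(b_i − x_{i,r_i})/p_i), and X_r ∈ [0,P_r) is determined by X_r ≡ p₂^{r₂}M_{1,r}X_{1,r₁} + p₁^{r₁}M_{2,r}X_{2,r₂} mod P_r with X_{i,r_i} = Σ_{1≤j≤r_i} x_{i,j} p_i^{j−1}. Moreover |φ_{r,Q,N,m}| ≤ 1/max(1,|m|) and |ψ_r(m,x)| ≤ p₁p₂. -/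
open Finset Complex

private lemma ee_add (x y : ℂ) :
    Complex.exp (2 * (Real.pi : ℂ) * Complex.I * (x + y))
    = Complex.exp (2 * (Real.pi : ℂ) * Complex.I * x)
      * Complex.exp (2 * (Real.pi : ℂ) * Complex.I * y) := by
  rw [← Complex.exp_add]; ring_nf

private lemma ee_int (n : ℤ) :
    Complex.exp (2 * (Real.pi : ℂ) * Complex.I * (n : ℂ)) = 1 := by
  rw [show 2 * (Real.pi : ℂ) * Complex.I * (n : ℂ) = (n : ℂ) * (2 * Real.pi * Complex.I) by ring]
  exact Complex.exp_int_mul_two_pi_mul_I n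

private lemma ee_norm (t : ℝ) :
    ‖Complex.exp (2 * (Real.pi : ℂ) * Complex.I * (t : ℂ))‖ = 1 := by
  rw [show 2 * (Real.pi : ℂ) * Complex.I * (t : ℂ) = ((2 * Real.pi * t : ℝ) : ℂ) * Complex.I by
    push_cast; ring]
  exact Complex.norm_exp_ofReal_mul_I _

private lemma orth (P : ℕ) (hP : 0 < P) (n : ℤ) :
    ∑ m ∈ Finset.range P,
      Complex.exp (2 * (Real.pi : ℂ) * Complex.I * ((m : ℂ) * (n : ℂ) / (P : ℂ)))
    = if (P : ℤ) ∣ n then (P : ℂ) else 0 := by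
  have hPC : (P : ℂ) ≠ 0 := Nat.cast_ne_zero.2 hP.ne'
  set z : ℂ := Complex.exp (2 * (Real.pi : ℂ) * Complex.I * ((n : ℂ) / (P : ℂ))) with hz
  have hterm : ∀ m : ℕ,
      Complex.exp (2 * (Real.pi : ℂ) * Complex.I * ((m : ℂ) * (n : ℂ) / (P : ℂ))) = z ^ m := by
    intro m
    rw [show 2 * (Real.pi : ℂ) * Complex.I * ((m : ℂ) * (n : ℂ) / (P : ℂ))
        = (m : ℂ) * (2 * (Real.pi : ℂ) * Complex.I * ((n : ℂ) / (P : ℂ))) by ring,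
      Complex.exp_nat_mul]
  simp only [hterm]
  by_cases hd : (P : ℤ) ∣ n
  · obtain ⟨t, ht⟩ := hd
    have hz1 : z = 1 := by
      rw [hz, show (n : ℂ) / (P : ℂ) = (t : ℂ) by
        rw [ht]; push_cast; field_simp]
      exact ee_int t
    rw [if_pos ⟨t, ht⟩]
    simp [hz1]
  · have hz1 : z ≠ 1 := by
      intro h
      rw [hz, Complex.exp_eq_one_iff] at h
      obtain ⟨k, hk⟩ := h
      have h2 : (2 * (Real.pi : ℂ) * Complex.I) ≠ 0 := by
        simp [Real.pi_ne_zero, Complex.I_ne_zero]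
      have h3 : (n : ℂ) / (P : ℂ) = (k : ℂ) := by
        apply mul_left_cancel₀ h2
        rw [hk]; ring
      have h4 : (n : ℂ) = (k : ℂ) * (P : ℂ) := by
        field_simp at h3; linear_combination h3
      have h5 : n = k * P := by exact_mod_cast h4
      exact hd ⟨k, by linarith⟩
    have hzP : z ^ P = 1 := by
      rw [hz, ← Complex.exp_nat_mul,
        show (P : ℂ) * (2 * (Real.pi : ℂ) * Complex.I * ((n : ℂ) / (P : ℂ)))
          = 2 * (Real.pi : ℂ) * Complex.I * (n : ℂ) by field_simp]
      exact ee_int n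
    rw [if_neg hd, geom_sum_eq hz1, hzP]
    simp

private lemma reindex (P : ℕ) (hP : 0 < P) (F : ℤ → ℂ)
    (hF : ∀ a b : ℤ, (P : ℤ) ∣ (a - b) → F a = F b) :
    ∑ m ∈ Finset.Icc (-(((P : ℤ) - 1) / 2)) ((P : ℤ) / 2), F m
    = ∑ a ∈ Finset.range P, F (a : ℤ) := by
  have hP' : ((P : ℤ)) ≠ 0 := by exact_mod_cast hP.ne'
  have hPpos : (0 : ℤ) < P := by exact_mod_cast hP
  refine Finset.sum_nbij' (fun m => (m % (P : ℤ)).toNat)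
    (fun a => if (a : ℤ) ≤ (P : ℤ) / 2 then (a : ℤ) else (a : ℤ) - P) ?_ ?_ ?_ ?_ ?_
  · intro m hm
    have h0 : 0 ≤ m % (P : ℤ) := Int.emod_nonneg m hP'
    have h1 : m % (P : ℤ) < P := Int.emod_lt_of_pos m hPpos
    simp only [Finset.mem_range]
    omega
  · intro a ha
    simp only [Finset.mem_range] at ha
    simp only [Finset.mem_Icc]
    split_ifs with h <;> omega
  · intro m hm
    simp only [Finset.mem_Icc] at hm
    rcases le_or_gt 0 m with h | h
    · have h1 : m % (P : ℤ) = m := Int.emod_eq_of_lt h (by omega)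
      simp only [h1, Int.toNat_of_nonneg h]
      rw [if_pos hm.2]
    · have h2 : m % (P : ℤ) = m + P := by
        have := Int.add_mul_emod_self_left (a := m) (b := (P : ℤ)) (c := 1)
        rw [mul_one] at this
        rw [← this, Int.emod_eq_of_lt (by omega) (by omega)]
      rw [h2, Int.toNat_of_nonneg (by omega), if_neg (by omega)]
      ring
  · intro a ha
    simp only [Finset.mem_range] at ha
    have haP : (a : ℤ) < P := by exact_mod_cast ha
    split_ifs with h
    · rw [Int.emod_eq_of_lt (by positivity) haP]; simp
    · rw [Int.sub_emod_right, Int.emod_eq_of_lt (by positivity) haP]; simp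
  · intro m hm
    apply hF
    have h0 : 0 ≤ m % (P : ℤ) := Int.emod_nonneg m hP'
    rw [Int.toNat_of_nonneg h0]
    exact ⟨m / P, by linarith [Int.mul_ediv_add_emod m (P : ℤ)]⟩

private lemma point (P : ℕ) (hP : 0 < P) (n : ℤ) :
    ((if (P : ℤ) ∣ n then (1 : ℂ) else 0) - 1 / (P : ℂ))
    = (1 / (P : ℂ)) * ∑ m ∈ (Finset.Icc (-(((P : ℤ) - 1) / 2)) ((P : ℤ) / 2)).erase 0,
        Complex.exp (2 * (Real.pi : ℂ) * Complex.I * ((m : ℂ) * (n : ℂ) / (P : ℂ))) := by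
  have hPC : (P : ℂ) ≠ 0 := Nat.cast_ne_zero.2 hP.ne'
  have hPpos : (0 : ℤ) < P := by exact_mod_cast hP
  have h0mem : (0 : ℤ) ∈ Finset.Icc (-(((P : ℤ) - 1) / 2)) ((P : ℤ) / 2) := by
    simp only [Finset.mem_Icc]; omega
  have herase := Finset.sum_erase_add (Finset.Icc (-(((P : ℤ) - 1) / 2)) ((P : ℤ) / 2))
    (fun m : ℤ => Complex.exp (2 * (Real.pi : ℂ) * Complex.I * ((m : ℂ) * (n : ℂ) / (P : ℂ))))
    h0mem
  have hF : ∀ a b : ℤ, (P : ℤ) ∣ (a - b) →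
      Complex.exp (2 * (Real.pi : ℂ) * Complex.I * ((a : ℂ) * (n : ℂ) / (P : ℂ)))
      = Complex.exp (2 * (Real.pi : ℂ) * Complex.I * ((b : ℂ) * (n : ℂ) / (P : ℂ))) := by
    intro a b ⟨t, ht⟩
    have ha : a = b + P * t := by linarith
    rw [show (a : ℂ) * (n : ℂ) / (P : ℂ)
        = (b : ℂ) * (n : ℂ) / (P : ℂ) + ((t * n : ℤ) : ℂ) by
      rw [ha]; push_cast; field_simp]
    rw [ee_add, ee_int, mul_one]
  have hall := reindex P hP
    (fun m : ℤ => Complex.exp (2 * (Real.pi : ℂ) * Complex.I * ((m : ℂ) * (n : ℂ) / (P : ℂ)))) hF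
  have h0val : Complex.exp (2 * (Real.pi : ℂ) * Complex.I * (((0 : ℤ) : ℂ) * (n : ℂ) / (P : ℂ)))
      = 1 := by norm_num
  have : ∑ m ∈ (Finset.Icc (-(((P : ℤ) - 1) / 2)) ((P : ℤ) / 2)).erase 0,
      Complex.exp (2 * (Real.pi : ℂ) * Complex.I * ((m : ℂ) * (n : ℂ) / (P : ℂ)))
      = (if (P : ℤ) ∣ n then (P : ℂ) else 0) - 1 := by
    have h := herase
    beta_reduce at h hall
    have horth : ∑ a ∈ Finset.range P,
        Complex.exp (2 * (Real.pi : ℂ) * Complex.I * (((a : ℤ) : ℂ) * (n : ℂ) / (P : ℂ)))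
        = if (P : ℤ) ∣ n then (P : ℂ) else 0 := by
      rw [← orth P hP n]
      refine Finset.sum_congr rfl fun a _ => ?_
      norm_cast
    rw [hall] at h
    linear_combination h + horth - h0val
  rw [this]
  split_ifs <;> field_simp <;> ring

private lemma factor {s t u : Finset ℕ} {c D : ℂ} {A B C : ℕ → ℂ} :
    ∑ b₁ ∈ s, ∑ b₂ ∈ t, ∑ k ∈ u, c * (A k * (B b₁ * C b₂) * D)
    = (c * ∑ k ∈ u, A k) * ((∑ b₁ ∈ s, B b₁) * (∑ b₂ ∈ t, C b₂)) * D := by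
  have inner : ∀ b₁ b₂ : ℕ, ∑ k ∈ u, c * (A k * (B b₁ * C b₂) * D)
      = ((c * D * ∑ k ∈ u, A k) * C b₂) * B b₁ := by
    intro b₁ b₂
    calc ∑ k ∈ u, c * (A k * (B b₁ * C b₂) * D)
        = ∑ k ∈ u, A k * (c * (B b₁ * C b₂) * D) :=
          Finset.sum_congr rfl fun k _ => by ring
      _ = (∑ k ∈ u, A k) * (c * (B b₁ * C b₂) * D) := by rw [← Finset.sum_mul]
      _ = ((c * D * ∑ k ∈ u, A k) * C b₂) * B b₁ := by ring
  calc ∑ b₁ ∈ s, ∑ b₂ ∈ t, ∑ k ∈ u, c * (A k * (B b₁ * C b₂) * D)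
      = ∑ b₁ ∈ s, ∑ b₂ ∈ t, ((c * D * ∑ k ∈ u, A k) * C b₂) * B b₁ :=
        Finset.sum_congr rfl fun b₁ _ => Finset.sum_congr rfl fun b₂ _ => inner b₁ b₂
    _ = ∑ b₁ ∈ s, ∑ b₂ ∈ t, C b₂ * ((c * D * ∑ k ∈ u, A k) * B b₁) :=
        Finset.sum_congr rfl fun b₁ _ => Finset.sum_congr rfl fun b₂ _ => by ring
    _ = ∑ b₁ ∈ s, (∑ b₂ ∈ t, C b₂) * ((c * D * ∑ k ∈ u, A k) * B b₁) :=
        Finset.sum_congr rfl fun b₁ _ => by rw [← Finset.sum_mul]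
    _ = ∑ b₁ ∈ s, B b₁ * ((∑ b₂ ∈ t, C b₂) * (c * D * ∑ k ∈ u, A k)) :=
        Finset.sum_congr rfl fun b₁ _ => by ring
    _ = (∑ b₁ ∈ s, B b₁) * ((∑ b₂ ∈ t, C b₂) * (c * D * ∑ k ∈ u, A k)) := by
        rw [← Finset.sum_mul]
    _ = (c * ∑ k ∈ u, A k) * ((∑ b₁ ∈ s, B b₁) * (∑ b₂ ∈ t, C b₂)) * D := by ring

private lemma swap4 {s₁ s₂ s₃ : Finset ℕ} {S : Finset ℤ} {f : ℕ → ℕ → ℕ → ℤ → ℂ} :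
    ∑ b₁ ∈ s₁, ∑ b₂ ∈ s₂, ∑ k ∈ s₃, ∑ m ∈ S, f b₁ b₂ k m
    = ∑ m ∈ S, ∑ b₁ ∈ s₁, ∑ b₂ ∈ s₂, ∑ k ∈ s₃, f b₁ b₂ k m := by
  calc ∑ b₁ ∈ s₁, ∑ b₂ ∈ s₂, ∑ k ∈ s₃, ∑ m ∈ S, f b₁ b₂ k m
      = ∑ b₁ ∈ s₁, ∑ b₂ ∈ s₂, ∑ m ∈ S, ∑ k ∈ s₃, f b₁ b₂ k m :=
        Finset.sum_congr rfl fun _ _ => Finset.sum_congr rfl fun _ _ => Finset.sum_comm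
    _ = ∑ b₁ ∈ s₁, ∑ m ∈ S, ∑ b₂ ∈ s₂, ∑ k ∈ s₃, f b₁ b₂ k m :=
        Finset.sum_congr rfl fun _ _ => Finset.sum_comm
    _ = ∑ m ∈ S, ∑ b₁ ∈ s₁, ∑ b₂ ∈ s₂, ∑ k ∈ s₃, f b₁ b₂ k m := Finset.sum_comm

set_option maxHeartbeats 1000000 in
theorem stmt11 (p₁ p₂ : ℕ) (hp₁ : p₁.Prime) (hp₂ : p₂.Prime) (hne : p₁ ≠ p₂)
    (r₁ r₂ : ℕ) (hr₁ : 1 ≤ r₁) (hr₂ : 1 ≤ r₂) (Q N : ℕ) (hN : 1 ≤ N)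
    (d₁ d₂ : ℕ → ℕ) (hd₁ : ∀ j, d₁ j < p₁) (hd₂ : ∀ j, d₂ j < p₂)
    (M₁ M₂ : ℤ) (hM₁ : (p₂ : ℤ) ^ r₂ * M₁ ≡ 1 [ZMOD (p₁ : ℤ) ^ r₁])
    (hM₂ : (p₁ : ℤ) ^ r₁ * M₂ ≡ 1 [ZMOD (p₂ : ℤ) ^ r₂])
    (P : ℕ) (hP : P = p₁ ^ r₁ * p₂ ^ r₂)
    (X : ℤ) (hX0 : 0 ≤ X) (hX1 : X < (P : ℤ))
    (hX : X ≡
        M₁ * (p₂ : ℤ) ^ r₂ * (∑ j ∈ Finset.range r₁, (d₁ (j + 1) : ℤ) * (p₁ : ℤ) ^ j)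
      + M₂ * (p₁ : ℤ) ^ r₁ * (∑ j ∈ Finset.range r₂, (d₂ (j + 1) : ℤ) * (p₂ : ℤ) ^ j)
        [ZMOD (P : ℤ)])
    (Xb : ℕ → ℕ → ℤ)
    (hXb : ∀ b₁ b₂ : ℕ, Xb b₁ b₂ ≡
        M₁ * (p₂ : ℤ) ^ r₂ * (∑ j ∈ Finset.range (r₁ - 1), (d₁ (j + 1) : ℤ) * (p₁ : ℤ) ^ j
            + (b₁ : ℤ) * (p₁ : ℤ) ^ (r₁ - 1))
      + M₂ * (p₁ : ℤ) ^ r₁ * (∑ j ∈ Finset.range (r₂ - 1), (d₂ (j + 1) : ℤ) * (p₂ : ℤ) ^ j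
            + (b₂ : ℤ) * (p₂ : ℤ) ^ (r₂ - 1)) [ZMOD (P : ℤ)]) :
    (∑ b₁ ∈ Finset.range (d₁ r₁), ∑ b₂ ∈ Finset.range (d₂ r₂), ∑ k ∈ Finset.Ico Q (Q + N),
        ((if (P : ℤ) ∣ ((k : ℤ) - Xb b₁ b₂) then (1 : ℂ) else 0) - 1 / (P : ℂ)))
      = ∑ m ∈ (Finset.Icc (-(((P : ℤ) - 1) / 2)) ((P : ℤ) / 2)).erase 0,
          ((1 / (P : ℂ)) * ∑ k ∈ Finset.Ico Q (Q + N),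
              Complex.exp (2 * (Real.pi : ℂ) * Complex.I * ((m : ℂ) * (k : ℂ) / (P : ℂ))))
          * ((∑ b₁ ∈ Finset.range (d₁ r₁),
                Complex.exp (2 * (Real.pi : ℂ) * Complex.I *
                  (-(m : ℂ) * (M₁ : ℂ) * ((b₁ : ℂ) - (d₁ r₁ : ℂ)) / (p₁ : ℂ))))
            * (∑ b₂ ∈ Finset.range (d₂ r₂),
                Complex.exp (2 * (Real.pi : ℂ) * Complex.I *
                  (-(m : ℂ) * (M₂ : ℂ) * ((b₂ : ℂ) - (d₂ r₂ : ℂ)) / (p₂ : ℂ)))))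
          * Complex.exp (2 * (Real.pi : ℂ) * Complex.I * (-(m : ℂ) * (X : ℂ) / (P : ℂ)))
    ∧ ∀ m ∈ (Finset.Icc (-(((P : ℤ) - 1) / 2)) ((P : ℤ) / 2)).erase 0,
        ‖(1 / (P : ℂ)) * ∑ k ∈ Finset.Ico Q (Q + N),
            Complex.exp (2 * (Real.pi : ℂ) * Complex.I * ((m : ℂ) * (k : ℂ) / (P : ℂ)))‖
          ≤ 1 / ((max 1 |m| : ℤ) : ℝ)
      ∧ ‖(∑ b₁ ∈ Finset.range (d₁ r₁),
              Complex.exp (2 * (Real.pi : ℂ) * Complex.I *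
                (-(m : ℂ) * (M₁ : ℂ) * ((b₁ : ℂ) - (d₁ r₁ : ℂ)) / (p₁ : ℂ))))
          * (∑ b₂ ∈ Finset.range (d₂ r₂),
              Complex.exp (2 * (Real.pi : ℂ) * Complex.I *
                (-(m : ℂ) * (M₂ : ℂ) * ((b₂ : ℂ) - (d₂ r₂ : ℂ)) / (p₂ : ℂ))))‖
          ≤ (p₁ : ℝ) * (p₂ : ℝ) := by
  have hp₁2 : 2 ≤ p₁ := hp₁.two_le
  have hp₂2 : 2 ≤ p₂ := hp₂.two_le
  have hPpos : 0 < P := by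
    rw [hP]; positivity
  have hPC : (P : ℂ) ≠ 0 := Nat.cast_ne_zero.2 hPpos.ne'
  have hp₁C : (p₁ : ℂ) ≠ 0 := Nat.cast_ne_zero.2 (by omega)
  have hp₂C : (p₂ : ℂ) ≠ 0 := Nat.cast_ne_zero.2 (by omega)
  have hPC' : (P : ℂ) = (p₁ : ℂ) ^ r₁ * (p₂ : ℂ) ^ r₂ := by
    rw [hP]; push_cast; ring
  -- key pointwise factorization
  have key : ∀ (m : ℤ) (b₁ b₂ k : ℕ),
      Complex.exp (2 * (Real.pi : ℂ) * Complex.I *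
        ((m : ℂ) * (((k : ℤ) - Xb b₁ b₂ : ℤ) : ℂ) / (P : ℂ)))
      = Complex.exp (2 * (Real.pi : ℂ) * Complex.I * ((m : ℂ) * (k : ℂ) / (P : ℂ)))
        * (Complex.exp (2 * (Real.pi : ℂ) * Complex.I *
              (-(m : ℂ) * (M₁ : ℂ) * ((b₁ : ℂ) - (d₁ r₁ : ℂ)) / (p₁ : ℂ)))
          * Complex.exp (2 * (Real.pi : ℂ) * Complex.I *
              (-(m : ℂ) * (M₂ : ℂ) * ((b₂ : ℂ) - (d₂ r₂ : ℂ)) / (p₂ : ℂ))))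
        * Complex.exp (2 * (Real.pi : ℂ) * Complex.I * (-(m : ℂ) * (X : ℂ) / (P : ℂ))) := by
    intro m b₁ b₂ k
    -- split the digit sums
    have hsplit1 : ∑ j ∈ Finset.range r₁, (d₁ (j + 1) : ℤ) * (p₁ : ℤ) ^ j
        = ∑ j ∈ Finset.range (r₁ - 1), (d₁ (j + 1) : ℤ) * (p₁ : ℤ) ^ j
          + (d₁ r₁ : ℤ) * (p₁ : ℤ) ^ (r₁ - 1) := by
      conv_lhs => rw [show r₁ = (r₁ - 1) + 1 by omega]
      rw [Finset.sum_range_succ, show r₁ - 1 + 1 = r₁ by omega]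
    have hsplit2 : ∑ j ∈ Finset.range r₂, (d₂ (j + 1) : ℤ) * (p₂ : ℤ) ^ j
        = ∑ j ∈ Finset.range (r₂ - 1), (d₂ (j + 1) : ℤ) * (p₂ : ℤ) ^ j
          + (d₂ r₂ : ℤ) * (p₂ : ℤ) ^ (r₂ - 1) := by
      conv_lhs => rw [show r₂ = (r₂ - 1) + 1 by omega]
      rw [Finset.sum_range_succ, show r₂ - 1 + 1 = r₂ by omega]
    have hdiff : Xb b₁ b₂ - X ≡
        M₁ * (p₂ : ℤ) ^ r₂ * (p₁ : ℤ) ^ (r₁ - 1) * ((b₁ : ℤ) - (d₁ r₁ : ℤ))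
        + M₂ * (p₁ : ℤ) ^ r₁ * (p₂ : ℤ) ^ (r₂ - 1) * ((b₂ : ℤ) - (d₂ r₂ : ℤ))
        [ZMOD (P : ℤ)] := by
      have h1 := (hXb b₁ b₂).sub hX
      have h2 : (M₁ * (p₂ : ℤ) ^ r₂ * (∑ j ∈ Finset.range (r₁ - 1), (d₁ (j + 1) : ℤ) * (p₁ : ℤ) ^ j
            + (b₁ : ℤ) * (p₁ : ℤ) ^ (r₁ - 1))
          + M₂ * (p₁ : ℤ) ^ r₁ * (∑ j ∈ Finset.range (r₂ - 1), (d₂ (j + 1) : ℤ) * (p₂ : ℤ) ^ j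
            + (b₂ : ℤ) * (p₂ : ℤ) ^ (r₂ - 1)))
          - (M₁ * (p₂ : ℤ) ^ r₂ * (∑ j ∈ Finset.range r₁, (d₁ (j + 1) : ℤ) * (p₁ : ℤ) ^ j)
          + M₂ * (p₁ : ℤ) ^ r₁ * (∑ j ∈ Finset.range r₂, (d₂ (j + 1) : ℤ) * (p₂ : ℤ) ^ j))
          = M₁ * (p₂ : ℤ) ^ r₂ * (p₁ : ℤ) ^ (r₁ - 1) * ((b₁ : ℤ) - (d₁ r₁ : ℤ))
          + M₂ * (p₁ : ℤ) ^ r₁ * (p₂ : ℤ) ^ (r₂ - 1) * ((b₂ : ℤ) - (d₂ r₂ : ℤ)) := by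
        rw [hsplit1, hsplit2]; ring
      rw [← h2]; exact h1
    obtain ⟨t, ht⟩ := hdiff.dvd
    have hXbeq : Xb b₁ b₂ = X
        + M₁ * (p₂ : ℤ) ^ r₂ * (p₁ : ℤ) ^ (r₁ - 1) * ((b₁ : ℤ) - (d₁ r₁ : ℤ))
        + M₂ * (p₁ : ℤ) ^ r₁ * (p₂ : ℤ) ^ (r₂ - 1) * ((b₂ : ℤ) - (d₂ r₂ : ℤ))
        - (P : ℤ) * t := by linarith
    have harg : (m : ℂ) * (((k : ℤ) - Xb b₁ b₂ : ℤ) : ℂ) / (P : ℂ)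
        = (m : ℂ) * (k : ℂ) / (P : ℂ)
          + ((-(m : ℂ) * (M₁ : ℂ) * ((b₁ : ℂ) - (d₁ r₁ : ℂ)) / (p₁ : ℂ))
            + (-(m : ℂ) * (M₂ : ℂ) * ((b₂ : ℂ) - (d₂ r₂ : ℂ)) / (p₂ : ℂ)))
          + (-(m : ℂ) * (X : ℂ) / (P : ℂ))
          + ((m * t : ℤ) : ℂ) := by
      have hXbC : ((Xb b₁ b₂ : ℤ) : ℂ) = (X : ℂ)
          + (M₁ : ℂ) * (p₂ : ℂ) ^ r₂ * (p₁ : ℂ) ^ (r₁ - 1) * ((b₁ : ℂ) - (d₁ r₁ : ℂ))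
          + (M₂ : ℂ) * (p₁ : ℂ) ^ r₁ * (p₂ : ℂ) ^ (r₂ - 1) * ((b₂ : ℂ) - (d₂ r₂ : ℂ))
          - (P : ℂ) * (t : ℂ) := by
        rw [hXbeq]; push_cast; ring
      have hp₁pow : (p₁ : ℂ) ^ r₁ = (p₁ : ℂ) ^ (r₁ - 1) * (p₁ : ℂ) := by
        conv_lhs => rw [show r₁ = (r₁ - 1) + 1 by omega]
        rw [pow_succ]
      have hp₂pow : (p₂ : ℂ) ^ r₂ = (p₂ : ℂ) ^ (r₂ - 1) * (p₂ : ℂ) := by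
        conv_lhs => rw [show r₂ = (r₂ - 1) + 1 by omega]
        rw [pow_succ]
      have hQ1 : (p₁ : ℂ) * ((p₁ : ℂ) ^ (r₁ - 1) * (p₂ : ℂ) ^ r₂) = (P : ℂ) := by
        rw [hPC', hp₁pow]; ring
      have hQ2 : (p₂ : ℂ) * ((p₂ : ℂ) ^ (r₂ - 1) * (p₁ : ℂ) ^ r₁) = (P : ℂ) := by
        rw [hPC', hp₂pow]; ring
      have e₁ : -(m : ℂ) * (M₁ : ℂ) * ((b₁ : ℂ) - (d₁ r₁ : ℂ)) / (p₁ : ℂ)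
          = -(m : ℂ) * (M₁ : ℂ) * ((b₁ : ℂ) - (d₁ r₁ : ℂ))
            * ((p₁ : ℂ) ^ (r₁ - 1) * (p₂ : ℂ) ^ r₂) / (P : ℂ) := by
        rw [div_eq_div_iff hp₁C hPC, ← hQ1]; ring
      have e₂ : -(m : ℂ) * (M₂ : ℂ) * ((b₂ : ℂ) - (d₂ r₂ : ℂ)) / (p₂ : ℂ)
          = -(m : ℂ) * (M₂ : ℂ) * ((b₂ : ℂ) - (d₂ r₂ : ℂ))
            * ((p₂ : ℂ) ^ (r₂ - 1) * (p₁ : ℂ) ^ r₁) / (P : ℂ) := by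
        rw [div_eq_div_iff hp₂C hPC, ← hQ2]; ring
      have e₃ : ((m * t : ℤ) : ℂ) = (m : ℂ) * (t : ℂ) * (P : ℂ) / (P : ℂ) := by
        rw [mul_div_cancel_right₀ _ hPC]; push_cast; ring
      rw [e₁, e₂, e₃, ← add_div, ← add_div, ← add_div]
      congr 1
      push_cast
      rw [hXbC, hPC', hp₁pow, hp₂pow]
      ring
    rw [harg, ee_add, ee_int, mul_one, ee_add, ee_add, ee_add]
  constructor
  · -- the identity
    calc (∑ b₁ ∈ Finset.range (d₁ r₁), ∑ b₂ ∈ Finset.range (d₂ r₂),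
          ∑ k ∈ Finset.Ico Q (Q + N),
          ((if (P : ℤ) ∣ ((k : ℤ) - Xb b₁ b₂) then (1 : ℂ) else 0) - 1 / (P : ℂ)))
        = ∑ b₁ ∈ Finset.range (d₁ r₁), ∑ b₂ ∈ Finset.range (d₂ r₂),
            ∑ k ∈ Finset.Ico Q (Q + N),
            ∑ m ∈ (Finset.Icc (-(((P : ℤ) - 1) / 2)) ((P : ℤ) / 2)).erase 0,
            (1 / (P : ℂ)) * Complex.exp (2 * (Real.pi : ℂ) * Complex.I *
              ((m : ℂ) * (((k : ℤ) - Xb b₁ b₂ : ℤ) : ℂ) / (P : ℂ))) := by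
          refine Finset.sum_congr rfl fun b₁ _ => Finset.sum_congr rfl fun b₂ _ =>
            Finset.sum_congr rfl fun k _ => ?_
          rw [point P hPpos ((k : ℤ) - Xb b₁ b₂), Finset.mul_sum]
      _ = ∑ m ∈ (Finset.Icc (-(((P : ℤ) - 1) / 2)) ((P : ℤ) / 2)).erase 0,
            ∑ b₁ ∈ Finset.range (d₁ r₁), ∑ b₂ ∈ Finset.range (d₂ r₂),
            ∑ k ∈ Finset.Ico Q (Q + N),
            (1 / (P : ℂ)) * Complex.exp (2 * (Real.pi : ℂ) * Complex.I *
              ((m : ℂ) * (((k : ℤ) - Xb b₁ b₂ : ℤ) : ℂ) / (P : ℂ))) := swap4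
      _ = _ := by
          refine Finset.sum_congr rfl fun m _ => ?_
          calc ∑ b₁ ∈ Finset.range (d₁ r₁), ∑ b₂ ∈ Finset.range (d₂ r₂),
                ∑ k ∈ Finset.Ico Q (Q + N),
                (1 / (P : ℂ)) * Complex.exp (2 * (Real.pi : ℂ) * Complex.I *
                  ((m : ℂ) * (((k : ℤ) - Xb b₁ b₂ : ℤ) : ℂ) / (P : ℂ)))
              = ∑ b₁ ∈ Finset.range (d₁ r₁), ∑ b₂ ∈ Finset.range (d₂ r₂),
                ∑ k ∈ Finset.Ico Q (Q + N),
                (1 / (P : ℂ)) *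
                  (Complex.exp (2 * (Real.pi : ℂ) * Complex.I * ((m : ℂ) * (k : ℂ) / (P : ℂ)))
                  * (Complex.exp (2 * (Real.pi : ℂ) * Complex.I *
                      (-(m : ℂ) * (M₁ : ℂ) * ((b₁ : ℂ) - (d₁ r₁ : ℂ)) / (p₁ : ℂ)))
                    * Complex.exp (2 * (Real.pi : ℂ) * Complex.I *
                      (-(m : ℂ) * (M₂ : ℂ) * ((b₂ : ℂ) - (d₂ r₂ : ℂ)) / (p₂ : ℂ))))
                  * Complex.exp (2 * (Real.pi : ℂ) * Complex.I *
                      (-(m : ℂ) * (X : ℂ) / (P : ℂ)))) := by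
                refine Finset.sum_congr rfl fun b₁ _ => Finset.sum_congr rfl fun b₂ _ =>
                  Finset.sum_congr rfl fun k _ => ?_
                rw [key m b₁ b₂ k]
            _ = _ := factor
  · -- the bounds
    intro m hm
    rw [Finset.mem_erase, Finset.mem_Icc] at hm
    have hm0 := hm.1
    have hmA := hm.2.1
    have hmB := hm.2.2
    have habs1 : 1 ≤ |m| := Int.one_le_abs (by omega)
    have habs2 : 2 * |m| ≤ (P : ℤ) := by
      rcases le_or_gt 0 m with h | h
      · rw [_root_.abs_of_nonneg h]; omega
      · rw [_root_.abs_of_neg h]; omega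
    have hPR : (0 : ℝ) < (P : ℝ) := by exact_mod_cast hPpos
    have hmR : (0 : ℝ) < ((|m| : ℤ) : ℝ) := by exact_mod_cast habs1
    constructor
    · -- the φ bound
      set z : ℂ := Complex.exp (2 * (Real.pi : ℂ) * Complex.I * ((m : ℂ) / (P : ℂ))) with hz
      have hterm : ∀ k : ℕ,
          Complex.exp (2 * (Real.pi : ℂ) * Complex.I * ((m : ℂ) * (k : ℂ) / (P : ℂ)))
          = z ^ k := by
        intro k
        rw [hz, show 2 * (Real.pi : ℂ) * Complex.I * ((m : ℂ) * (k : ℂ) / (P : ℂ))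
          = (k : ℂ) * (2 * (Real.pi : ℂ) * Complex.I * ((m : ℂ) / (P : ℂ))) by ring,
          Complex.exp_nat_mul]
      have hznorm : ‖z‖ = 1 := by
        rw [hz, show (m : ℂ) / (P : ℂ) = (((m : ℝ) / (P : ℝ) : ℝ) : ℂ) by push_cast; ring]
        exact ee_norm _
      have hz1 : z ≠ 1 := by
        intro h
        rw [hz, Complex.exp_eq_one_iff] at h
        obtain ⟨j, hj⟩ := h
        have h2 : (2 * (Real.pi : ℂ) * Complex.I) ≠ 0 := by
          simp [Real.pi_ne_zero, Complex.I_ne_zero]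
        have h3 : (m : ℂ) / (P : ℂ) = (j : ℂ) := by
          apply mul_left_cancel₀ h2; rw [hj]; ring
        have h4 : (m : ℂ) = (j : ℂ) * (P : ℂ) := by
          field_simp at h3; linear_combination h3
        have h5 : m = j * P := by exact_mod_cast h4
        have hdvd : (P : ℤ) ∣ m := ⟨j, by linarith⟩
        have : (P : ℤ) ≤ |m| := Int.le_of_dvd (abs_pos.mpr hm0) ((dvd_abs _ _).mpr hdvd)
        omega
      -- geometric sum
      have hsum : ∑ k ∈ Finset.Ico Q (Q + N),
          Complex.exp (2 * (Real.pi : ℂ) * Complex.I * ((m : ℂ) * (k : ℂ) / (P : ℂ)))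
          = (z ^ (Q + N) - z ^ Q) / (z - 1) := by
        simp only [hterm]
        exact geom_sum_Ico hz1 (by omega)
      -- norm of z - 1 from below
      set θ : ℝ := 2 * Real.pi * (m : ℝ) / (P : ℝ) with hθ
      have hzθ : z = Complex.exp ((θ : ℂ) * Complex.I) := by
        rw [hz, hθ]; congr 1; push_cast; ring
      have hnormsq : ‖z - 1‖ ^ 2 = 2 - 2 * Real.cos θ := by
        rw [hzθ, Complex.sq_norm, Complex.normSq_apply]
        simp only [Complex.sub_re, Complex.sub_im, Complex.one_re, Complex.one_im,
          Complex.exp_ofReal_mul_I_re, Complex.exp_ofReal_mul_I_im]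
        nlinarith [Real.sin_sq_add_cos_sq θ]
      have hhalf : 2 - 2 * Real.cos θ = (2 * Real.sin (θ / 2)) ^ 2 := by
        have h := Real.sin_sq_eq_half_sub (θ / 2)
        rw [show 2 * (θ / 2) = θ by ring] at h
        nlinarith [h]
      have hnormz1 : ‖z - 1‖ = |2 * Real.sin (θ / 2)| := by
        calc ‖z - 1‖ = Real.sqrt (‖z - 1‖ ^ 2) := (Real.sqrt_sq (norm_nonneg _)).symm
          _ = Real.sqrt ((2 * Real.sin (θ / 2)) ^ 2) := by rw [hnormsq, hhalf]
          _ = |2 * Real.sin (θ / 2)| := Real.sqrt_sq_eq_abs _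
      -- lower bound on |sin(θ/2)|
      have hsinabs : |Real.sin (θ / 2)| = Real.sin (Real.pi * ((|m| : ℤ) : ℝ) / (P : ℝ)) := by
        have hθ2 : θ / 2 = Real.pi * (m : ℝ) / (P : ℝ) := by rw [hθ]; ring
        have hsin_nonneg : 0 ≤ Real.sin (Real.pi * ((|m| : ℤ) : ℝ) / (P : ℝ)) := by
          apply Real.sin_nonneg_of_nonneg_of_le_pi
          · positivity
          · rw [div_le_iff₀ hPR]
            have : ((|m| : ℤ) : ℝ) ≤ (P : ℝ) := by exact_mod_cast (by omega : |m| ≤ (P : ℤ))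
            nlinarith [Real.pi_pos]
        rcases le_or_gt 0 m with h | h
        · have hmm : ((|m| : ℤ) : ℝ) = (m : ℝ) := by
            exact_mod_cast congrArg (Int.cast : ℤ → ℝ) (_root_.abs_of_nonneg h)
          have hmR0 : (0 : ℝ) ≤ (m : ℝ) := by exact_mod_cast h
          rw [hθ2, hmm]
          apply _root_.abs_of_nonneg
          apply Real.sin_nonneg_of_nonneg_of_le_pi
          · positivity
          · rw [div_le_iff₀ hPR]
            have : (m : ℝ) ≤ (P : ℝ) := by exact_mod_cast (by omega : m ≤ (P : ℤ))
            nlinarith [Real.pi_pos]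
        · have habsm : ((|m| : ℤ) : ℝ) = -(m : ℝ) := by
            exact_mod_cast congrArg (Int.cast : ℤ → ℝ) (_root_.abs_of_neg h)
          rw [hθ2, show Real.pi * (m : ℝ) / (P : ℝ)
            = -(Real.pi * ((|m| : ℤ) : ℝ) / (P : ℝ)) by rw [habsm]; ring,
            Real.sin_neg, abs_neg, _root_.abs_of_nonneg hsin_nonneg]
      have hsinlb : 2 * ((|m| : ℤ) : ℝ) / (P : ℝ) ≤ Real.sin (Real.pi * ((|m| : ℤ) : ℝ) / (P : ℝ)) := by
        have hx2 : Real.pi * ((|m| : ℤ) : ℝ) / (P : ℝ) ≤ Real.pi / 2 := by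
          rw [div_le_div_iff₀ hPR two_pos]
          have : 2 * ((|m| : ℤ) : ℝ) ≤ (P : ℝ) := by exact_mod_cast habs2
          nlinarith [Real.pi_pos]
        have := Real.mul_le_sin (x := Real.pi * ((|m| : ℤ) : ℝ) / (P : ℝ)) (by positivity) hx2
        calc 2 * ((|m| : ℤ) : ℝ) / (P : ℝ)
            = 2 / Real.pi * (Real.pi * ((|m| : ℤ) : ℝ) / (P : ℝ)) := by
              field_simp
          _ ≤ _ := this
      have hdenlb : 4 * ((|m| : ℤ) : ℝ) / (P : ℝ) ≤ ‖z - 1‖ := by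
        rw [hnormz1, _root_.abs_mul, _root_.abs_two, hsinabs]
        calc 4 * ((|m| : ℤ) : ℝ) / (P : ℝ) = 2 * (2 * ((|m| : ℤ) : ℝ) / (P : ℝ)) := by ring
          _ ≤ 2 * Real.sin (Real.pi * ((|m| : ℤ) : ℝ) / (P : ℝ)) := by linarith [hsinlb]
      have hdenpos : (0 : ℝ) < ‖z - 1‖ :=
        lt_of_lt_of_le (by positivity) hdenlb
      have hnum : ‖z ^ (Q + N) - z ^ Q‖ ≤ 2 := by
        calc ‖z ^ (Q + N) - z ^ Q‖ ≤ ‖z ^ (Q + N)‖ + ‖z ^ Q‖ := norm_sub_le _ _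
          _ = 2 := by rw [norm_pow, norm_pow, hznorm]; norm_num
      have hsumbound : ‖∑ k ∈ Finset.Ico Q (Q + N),
          Complex.exp (2 * (Real.pi : ℂ) * Complex.I * ((m : ℂ) * (k : ℂ) / (P : ℂ)))‖
          ≤ (P : ℝ) / (2 * ((|m| : ℤ) : ℝ)) := by
        rw [hsum, norm_div]
        calc ‖z ^ (Q + N) - z ^ Q‖ / ‖z - 1‖
            ≤ 2 / (4 * ((|m| : ℤ) : ℝ) / (P : ℝ)) :=
              div_le_div₀ (by norm_num) hnum (by positivity) hdenlb
          _ = (P : ℝ) / (2 * ((|m| : ℤ) : ℝ)) := by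
              field_simp; ring
      have hmax : (max 1 |m| : ℤ) = |m| := max_eq_right habs1
      rw [hmax, norm_mul]
      have h1P : ‖(1 : ℂ) / (P : ℂ)‖ = 1 / (P : ℝ) := by
        simp [norm_div]
      rw [h1P]
      calc (1 / (P : ℝ)) * ‖∑ k ∈ Finset.Ico Q (Q + N),
            Complex.exp (2 * (Real.pi : ℂ) * Complex.I * ((m : ℂ) * (k : ℂ) / (P : ℂ)))‖
          ≤ (1 / (P : ℝ)) * ((P : ℝ) / (2 * ((|m| : ℤ) : ℝ))) := by
            apply mul_le_mul_of_nonneg_left hsumbound (by positivity)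
        _ = 1 / (2 * ((|m| : ℤ) : ℝ)) := by field_simp
        _ ≤ 1 / ((|m| : ℤ) : ℝ) := by
            apply one_div_le_one_div_of_le hmR
            linarith
    · -- the ψ bound
      have hb1 : ∀ b₁ : ℕ, ‖Complex.exp (2 * (Real.pi : ℂ) * Complex.I *
          (-(m : ℂ) * (M₁ : ℂ) * ((b₁ : ℂ) - (d₁ r₁ : ℂ)) / (p₁ : ℂ)))‖ = 1 := by
        intro b₁
        rw [show -(m : ℂ) * (M₁ : ℂ) * ((b₁ : ℂ) - (d₁ r₁ : ℂ)) / (p₁ : ℂ)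
          = (((-(m : ℝ) * (M₁ : ℝ) * ((b₁ : ℝ) - (d₁ r₁ : ℝ)) / (p₁ : ℝ)) : ℝ) : ℂ) by
            push_cast; ring]
        exact ee_norm _
      have hb2 : ∀ b₂ : ℕ, ‖Complex.exp (2 * (Real.pi : ℂ) * Complex.I *
          (-(m : ℂ) * (M₂ : ℂ) * ((b₂ : ℂ) - (d₂ r₂ : ℂ)) / (p₂ : ℂ)))‖ = 1 := by
        intro b₂
        rw [show -(m : ℂ) * (M₂ : ℂ) * ((b₂ : ℂ) - (d₂ r₂ : ℂ)) / (p₂ : ℂ)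
          = (((-(m : ℝ) * (M₂ : ℝ) * ((b₂ : ℝ) - (d₂ r₂ : ℝ)) / (p₂ : ℝ)) : ℝ) : ℂ) by
            push_cast; ring]
        exact ee_norm _
      have hS1 : ‖∑ b₁ ∈ Finset.range (d₁ r₁),
          Complex.exp (2 * (Real.pi : ℂ) * Complex.I *
            (-(m : ℂ) * (M₁ : ℂ) * ((b₁ : ℂ) - (d₁ r₁ : ℂ)) / (p₁ : ℂ)))‖ ≤ (p₁ : ℝ) := by
        calc ‖∑ b₁ ∈ Finset.range (d₁ r₁), _‖
            ≤ ∑ b₁ ∈ Finset.range (d₁ r₁), ‖Complex.exp (2 * (Real.pi : ℂ) * Complex.I *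
              (-(m : ℂ) * (M₁ : ℂ) * ((b₁ : ℂ) - (d₁ r₁ : ℂ)) / (p₁ : ℂ)))‖ :=
              norm_sum_le _ _
          _ = (d₁ r₁ : ℝ) := by
              simp only [hb1]; simp
          _ ≤ (p₁ : ℝ) := by exact_mod_cast (hd₁ r₁).le
      have hS2 : ‖∑ b₂ ∈ Finset.range (d₂ r₂),
          Complex.exp (2 * (Real.pi : ℂ) * Complex.I *
            (-(m : ℂ) * (M₂ : ℂ) * ((b₂ : ℂ) - (d₂ r₂ : ℂ)) / (p₂ : ℂ)))‖ ≤ (p₂ : ℝ) := by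
        calc ‖∑ b₂ ∈ Finset.range (d₂ r₂), _‖
            ≤ ∑ b₂ ∈ Finset.range (d₂ r₂), ‖Complex.exp (2 * (Real.pi : ℂ) * Complex.I *
              (-(m : ℂ) * (M₂ : ℂ) * ((b₂ : ℂ) - (d₂ r₂ : ℂ)) / (p₂ : ℂ)))‖ :=
              norm_sum_le _ _
          _ = (d₂ r₂ : ℝ) := by
              simp only [hb2]; simp
          _ ≤ (p₂ : ℝ) := by exact_mod_cast (hd₂ r₂).le
      rw [norm_mul]
      exact mul_le_mul hS1 hS2 (norm_nonneg _) (by positivity)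
end

section
/- Let p₁ ≠ p₂ be primes and let n, V, 𝒱 be positive integers with V = p₁⁴p₂⁴⌊(log₂ n)⁴⌋ and 𝒱 = ⌊(log₂ n)³⌋. Then the number of quadruples (r_{1,1}, r_{2,1}, r_{1,2}, r_{2,2}) ∈ [1,n]⁴ satisfying max(r_{1,j}, r_{2,j}) > V for j = 1,2, |r_{1,1} − r_{1,2}| ≤ 𝒱, |r_{2,1} − r_{2,2}| ≤ 𝒱, and min(max(r_{1,1},r_{1,2}), max(r_{2,1},r_{2,2})) ≤ V, is at most C·n·V·𝒱² for an absolute constant C. -/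
open Finset in
lemma stmt16_aux1 (n V W : ℕ) :
    (((Finset.Icc 1 n ×ˢ Finset.Icc 1 n) ×ˢ (Finset.Icc 1 n ×ˢ Finset.Icc 1 n)).filter
      fun q : (ℕ × ℕ) × ℕ × ℕ =>
        max q.1.1 q.2.1 ≤ V ∧ max q.1.1 q.2.1 - min q.1.1 q.2.1 ≤ W ∧
        max q.1.2 q.2.2 - min q.1.2 q.2.2 ≤ W).card ≤ V * n * (2 * W + 1) ^ 2 := by
  have h := Finset.card_le_card_of_injOn
    (f := fun q : (ℕ × ℕ) × ℕ × ℕ => ((q.1.1, q.1.2), (q.2.1 + W - q.1.1, q.2.2 + W - q.1.2)))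
    (s := ((Finset.Icc 1 n ×ˢ Finset.Icc 1 n) ×ˢ (Finset.Icc 1 n ×ˢ Finset.Icc 1 n)).filter
      fun q : (ℕ × ℕ) × ℕ × ℕ =>
        max q.1.1 q.2.1 ≤ V ∧ max q.1.1 q.2.1 - min q.1.1 q.2.1 ≤ W ∧
        max q.1.2 q.2.2 - min q.1.2 q.2.2 ≤ W)
    (t := (Finset.Icc 1 V ×ˢ Finset.Icc 1 n) ×ˢ (Finset.Icc 0 (2*W) ×ˢ Finset.Icc 0 (2*W)))
    ?_ ?_
  · calc _ ≤ _ := h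
    _ = V * n * (2 * W + 1) ^ 2 := by
        simp only [Finset.card_product, Nat.card_Icc, Nat.add_sub_cancel, Nat.sub_zero]
        ring
  · intro q hq
    simp only [Finset.mem_coe, Finset.mem_filter, Finset.mem_product, Finset.mem_Icc] at hq ⊢
    omega
  · intro q hq q' hq' heq
    simp only [Finset.coe_filter, Set.mem_setOf_eq, Finset.mem_product, Finset.mem_Icc] at hq hq'
    rcases q with ⟨⟨a, b⟩, c, d⟩
    rcases q' with ⟨⟨a', b'⟩, c', d'⟩
    simp only [Prod.mk.injEq] at heq hq hq' ⊢
    omega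

open Finset in
lemma stmt16_aux2 (n V W : ℕ) :
    (((Finset.Icc 1 n ×ˢ Finset.Icc 1 n) ×ˢ (Finset.Icc 1 n ×ˢ Finset.Icc 1 n)).filter
      fun q : (ℕ × ℕ) × ℕ × ℕ =>
        max q.1.2 q.2.2 ≤ V ∧ max q.1.1 q.2.1 - min q.1.1 q.2.1 ≤ W ∧
        max q.1.2 q.2.2 - min q.1.2 q.2.2 ≤ W).card ≤ V * n * (2 * W + 1) ^ 2 := by
  have h := Finset.card_le_card_of_injOn
    (f := fun q : (ℕ × ℕ) × ℕ × ℕ => ((q.1.2, q.1.1), (q.2.2 + W - q.1.2, q.2.1 + W - q.1.1)))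
    (s := ((Finset.Icc 1 n ×ˢ Finset.Icc 1 n) ×ˢ (Finset.Icc 1 n ×ˢ Finset.Icc 1 n)).filter
      fun q : (ℕ × ℕ) × ℕ × ℕ =>
        max q.1.2 q.2.2 ≤ V ∧ max q.1.1 q.2.1 - min q.1.1 q.2.1 ≤ W ∧
        max q.1.2 q.2.2 - min q.1.2 q.2.2 ≤ W)
    (t := (Finset.Icc 1 V ×ˢ Finset.Icc 1 n) ×ˢ (Finset.Icc 0 (2*W) ×ˢ Finset.Icc 0 (2*W)))
    ?_ ?_
  · calc _ ≤ _ := h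
    _ = V * n * (2 * W + 1) ^ 2 := by
        simp only [Finset.card_product, Nat.card_Icc, Nat.add_sub_cancel, Nat.sub_zero]
        ring
  · intro q hq
    simp only [Finset.mem_coe, Finset.mem_filter, Finset.mem_product, Finset.mem_Icc] at hq ⊢
    omega
  · intro q hq q' hq' heq
    simp only [Finset.coe_filter, Set.mem_setOf_eq, Finset.mem_product, Finset.mem_Icc] at hq hq'
    rcases q with ⟨⟨a, b⟩, c, d⟩
    rcases q' with ⟨⟨a', b'⟩, c', d'⟩
    simp only [Prod.mk.injEq] at heq hq hq' ⊢
    omega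

theorem stmt16 (p₁ p₂ : ℕ) (hp₁ : p₁.Prime) (hp₂ : p₂.Prime) (hne : p₁ ≠ p₂) :
    ∃ C : ℝ, 0 < C ∧ ∀ n : ℕ, 2 ≤ n →
      ((((Finset.Icc 1 n ×ˢ Finset.Icc 1 n) ×ˢ (Finset.Icc 1 n ×ˢ Finset.Icc 1 n)).filter
          fun q : (ℕ × ℕ) × ℕ × ℕ =>
            p₁ ^ 4 * p₂ ^ 4 * ⌊Real.logb 2 n ^ 4⌋₊ < max q.1.1 q.1.2 ∧
            p₁ ^ 4 * p₂ ^ 4 * ⌊Real.logb 2 n ^ 4⌋₊ < max q.2.1 q.2.2 ∧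
            max q.1.1 q.2.1 - min q.1.1 q.2.1 ≤ ⌊Real.logb 2 n ^ 3⌋₊ ∧
            max q.1.2 q.2.2 - min q.1.2 q.2.2 ≤ ⌊Real.logb 2 n ^ 3⌋₊ ∧
            min (max q.1.1 q.2.1) (max q.1.2 q.2.2) ≤ p₁ ^ 4 * p₂ ^ 4 * ⌊Real.logb 2 n ^ 4⌋₊).card
        : ℝ)
      ≤ C * (n : ℝ) * ((p₁ ^ 4 * p₂ ^ 4 * ⌊Real.logb 2 n ^ 4⌋₊ : ℕ) : ℝ)
          * ((⌊Real.logb 2 n ^ 3⌋₊ : ℕ) : ℝ) ^ 2 := by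
  refine ⟨18, by norm_num, fun n hn => ?_⟩
  set V : ℕ := p₁ ^ 4 * p₂ ^ 4 * ⌊Real.logb 2 n ^ 4⌋₊ with hV
  set W : ℕ := ⌊Real.logb 2 n ^ 3⌋₊ with hW
  have hlog : (1 : ℝ) ≤ Real.logb 2 n := by
    have h2 : (2 : ℝ) ≤ (n : ℝ) := by exact_mod_cast hn
    have := Real.logb_le_logb_of_le (b := 2) (by norm_num) (by norm_num) h2
    rwa [Real.logb_self_eq_one (by norm_num)] at this
  have hW1 : 1 ≤ W := by
    rw [hW]
    refine Nat.le_floor ?_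
    push_cast
    calc (1 : ℝ) = 1 ^ 3 := by norm_num
    _ ≤ Real.logb 2 n ^ 3 := pow_le_pow_left₀ zero_le_one hlog 3
  have hsub : (((Finset.Icc 1 n ×ˢ Finset.Icc 1 n) ×ˢ (Finset.Icc 1 n ×ˢ Finset.Icc 1 n)).filter
      fun q : (ℕ × ℕ) × ℕ × ℕ =>
        V < max q.1.1 q.1.2 ∧ V < max q.2.1 q.2.2 ∧
        max q.1.1 q.2.1 - min q.1.1 q.2.1 ≤ W ∧
        max q.1.2 q.2.2 - min q.1.2 q.2.2 ≤ W ∧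
        min (max q.1.1 q.2.1) (max q.1.2 q.2.2) ≤ V) ⊆
    (((Finset.Icc 1 n ×ˢ Finset.Icc 1 n) ×ˢ (Finset.Icc 1 n ×ˢ Finset.Icc 1 n)).filter
      fun q : (ℕ × ℕ) × ℕ × ℕ =>
        max q.1.1 q.2.1 ≤ V ∧ max q.1.1 q.2.1 - min q.1.1 q.2.1 ≤ W ∧
        max q.1.2 q.2.2 - min q.1.2 q.2.2 ≤ W) ∪
    (((Finset.Icc 1 n ×ˢ Finset.Icc 1 n) ×ˢ (Finset.Icc 1 n ×ˢ Finset.Icc 1 n)).filter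
      fun q : (ℕ × ℕ) × ℕ × ℕ =>
        max q.1.2 q.2.2 ≤ V ∧ max q.1.1 q.2.1 - min q.1.1 q.2.1 ≤ W ∧
        max q.1.2 q.2.2 - min q.1.2 q.2.2 ≤ W) := by
    intro q hq
    simp only [Finset.mem_filter, Finset.mem_union, Finset.mem_product, Finset.mem_Icc] at hq ⊢
    omega
  have h9 : (2 * W + 1) ^ 2 ≤ 9 * W ^ 2 := by
    have : 1 * 1 ≤ W * W := Nat.mul_le_mul hW1 hW1
    nlinarith
  have hcard : (((Finset.Icc 1 n ×ˢ Finset.Icc 1 n) ×ˢ (Finset.Icc 1 n ×ˢ Finset.Icc 1 n)).filter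
      fun q : (ℕ × ℕ) × ℕ × ℕ =>
        V < max q.1.1 q.1.2 ∧ V < max q.2.1 q.2.2 ∧
        max q.1.1 q.2.1 - min q.1.1 q.2.1 ≤ W ∧
        max q.1.2 q.2.2 - min q.1.2 q.2.2 ≤ W ∧
        min (max q.1.1 q.2.1) (max q.1.2 q.2.2) ≤ V).card ≤ 18 * (n * V * W ^ 2) := by
    calc _ ≤ _ := Finset.card_le_card hsub
    _ ≤ _ := Finset.card_union_le _ _
    _ ≤ V * n * (2 * W + 1) ^ 2 + V * n * (2 * W + 1) ^ 2 :=
        Nat.add_le_add (stmt16_aux1 n V W) (stmt16_aux2 n V W)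
    _ ≤ V * n * (9 * W ^ 2) + V * n * (9 * W ^ 2) := by gcongr
    _ = 18 * (n * V * W ^ 2) := by ring
  calc _ ≤ ((18 * (n * V * W ^ 2) : ℕ) : ℝ) := by exact_mod_cast hcard
  _ = 18 * (n : ℝ) * (V : ℝ) * (W : ℝ) ^ 2 := by push_cast; ring
end
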